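/- arXiv:1509.03189 — 3 statements merged into one kernel-verified Lean document; each statement's English description precedes it below -/
import Mathlib

section
/- Let a be a pmp action of a countable group G on an atomless probability space (X_a, μ_a). Then there exists a countably generated, G-invariant sub-σ-algebra F of the measurable sets of X_a such that μ_a restricted to F is atomless and the factor action a|_F (the action a viewed on the measure space (X_a, F, μ_a|_F)) is weakly equivalent to a. In particular, every pmp action of G on an atomless probability space is weakly equivalent to a pmp action on a standard atomless probability space. -/
open MeasureTheory Filter Topology
open scoped ENNReal symmDiff



/-! Probability-measure-preserving actions, partitions, and weak containment. -/

/-- `a` is a probability-measure-preserving (pmp) action of the group `G` on the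
measure space `(X, μ)`. -/
def IsPMP {G : Type*} [Group G] {X : Type*} [MeasurableSpace X]
    (μ : Measure X) (a : G → X → X) : Prop :=
  (∀ g : G, MeasurePreserving (a g) μ μ) ∧ (∀ x, a 1 x = x) ∧
    ∀ (g h : G) (x : X), a (g * h) x = a g (a h x)

/-- The translate `g · A` of a subset `A` under the action `a`. -/
def actSet {G X : Type*} (a : G → X → X) (g : G) (A : Set X) : Set X :=
  a g '' A

/-- An (exact) finite measurable partition of `X` with `k` atoms. -/
def IsPartition {X : Type*} [MeasurableSpace X] {k : ℕ} (P : Fin k → Set X) : Prop :=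
  (∀ i, MeasurableSet (P i)) ∧ Pairwise (Function.onFun Disjoint P) ∧ ⋃ i, P i = Set.univ

/-- `‖c(a,F,P) - c(b,F,Q)‖₁ = ∑_{i,j ≤ k} ∑_{f ∈ F} |μ(Pᵢ ∩ f·Pⱼ) - ν(Qᵢ ∩ f·Qⱼ)|`,
the `ℓ¹`-distance between the `F`-statistics of the two partitions. -/
noncomputable def statDist {G : Type*} {X Y : Type*} [MeasurableSpace X] [MeasurableSpace Y]
    (μ : Measure X) (a : G → X → X) (ν : Measure Y) (b : G → Y → Y)
    (F : Finset G) {k : ℕ} (P : Fin k → Set X) (Q : Fin k → Set Y) : ℝ :=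
  ∑ i : Fin k, ∑ j : Fin k, ∑ f ∈ F,
    |(μ (P i ∩ actSet a f (P j))).toReal - (ν (Q i ∩ actSet b f (Q j))).toReal|

/-- `d_{F,P}(a,b)`: the infimum over `k`-atom partitions `Q` of `X_b` of
`‖c(a,F,P) - c(b,F,Q)‖₁`. -/
noncomputable def dPart {G : Type*} {X Y : Type*} [MeasurableSpace X] [MeasurableSpace Y]
    (μ : Measure X) (a : G → X → X) (ν : Measure Y) (b : G → Y → Y)
    (F : Finset G) {k : ℕ} (P : Fin k → Set X) : ℝ :=
  sInf {r : ℝ | ∃ Q : Fin k → Set Y, IsPartition Q ∧ r = statDist μ a ν b F P Q}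

/-- `d_{F,k}(a,b)`: the supremum over `k`-atom partitions `P` of `X_a` of `d_{F,P}(a,b)`. -/
noncomputable def dNum {G : Type*} {X Y : Type*} [MeasurableSpace X] [MeasurableSpace Y]
    (μ : Measure X) (a : G → X → X) (ν : Measure Y) (b : G → Y → Y)
    (F : Finset G) (k : ℕ) : ℝ :=
  sSup {r : ℝ | ∃ P : Fin k → Set X, IsPartition P ∧ r = dPart μ a ν b F P}

/-- Weak containment `a ≺ b` of pmp actions: every finite partition of `X_a` and
every finite set of group elements can be `ε`-simulated by a partition of `X_b`. -/
def WC {G : Type*} {X Y : Type*} [MeasurableSpace X] [MeasurableSpace Y]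
    (μ : Measure X) (a : G → X → X) (ν : Measure Y) (b : G → Y → Y) : Prop :=
  ∀ ε : ℝ, 0 < ε → ∀ (F : Finset G) (k : ℕ) (P : Fin k → Set X), IsPartition P →
    ∃ Q : Fin k → Set Y, IsPartition Q ∧ statDist μ a ν b F P Q ≤ ε

/-- The measure `μ` is diffuse (atomless in the sense of measure algebras):
every non-null measurable set contains a measurable subset of strictly
intermediate measure. -/
def Diffuse {X : Type*} [MeasurableSpace X] (μ : Measure X) : Prop :=
  ∀ A : Set X, MeasurableSet A → μ A ≠ 0 →
    ∃ B : Set X, MeasurableSet B ∧ B ⊆ A ∧ 0 < μ B ∧ μ B < μ A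

/-- Diffuseness relative to a sub-σ-algebra `m`. -/
def DiffuseOn {X : Type*} (m : MeasurableSpace X) {m0 : MeasurableSpace X}
    (μ : Measure X) : Prop :=
  ∀ A : Set X, MeasurableSet[m] A → μ A ≠ 0 →
    ∃ B : Set X, MeasurableSet[m] B ∧ B ⊆ A ∧ 0 < μ B ∧ μ B < μ A

/-! ### Auxiliary lemmas -/

section Aux

variable {X : Type*} [MeasurableSpace X]

/-- From a diffuse measure, split off a subset of at most half the measure. -/
lemma Diffuse.halve (μ : Measure X) [IsProbabilityMeasure μ] (hd : Diffuse μ)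
    {A : Set X} (hA : MeasurableSet A) (h0 : μ A ≠ 0) :
    ∃ B, MeasurableSet B ∧ B ⊆ A ∧ 0 < μ B ∧ μ B ≤ μ A / 2 := by
  obtain ⟨B, hBm, hBA, hB0, hBlt⟩ := hd A hA h0
  have hsplit : μ (A \ B) = μ A - μ B :=
    measure_diff hBA hBm.nullMeasurableSet (ne_top_of_lt hBlt)
  rcases le_or_gt (μ B) (μ A / 2) with h | h
  · exact ⟨B, hBm, hBA, hB0, h⟩
  · refine ⟨A \ B, hA.diff hBm, Set.diff_subset, ?_, ?_⟩
    · rw [hsplit]; exact tsub_pos_of_lt hBlt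
    · rw [hsplit, tsub_le_iff_right]
      calc μ A = μ A / 2 + μ A / 2 := (ENNReal.add_halves _).symm
        _ ≤ μ A / 2 + μ B := by gcongr

/-- From a diffuse measure, split off an arbitrarily small positive-measure subset. -/
lemma Diffuse.small (μ : Measure X) [IsProbabilityMeasure μ] (hd : Diffuse μ)
    {A : Set X} (hA : MeasurableSet A) (h0 : μ A ≠ 0) {δ : ℝ≥0∞} (hδ : δ ≠ 0) :
    ∃ B, MeasurableSet B ∧ B ⊆ A ∧ 0 < μ B ∧ μ B ≤ δ := by
  have key : ∀ k : ℕ, ∃ B, MeasurableSet B ∧ B ⊆ A ∧ 0 < μ B ∧ μ B ≤ 2⁻¹ ^ k := by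
    intro k
    induction k with
    | zero => exact ⟨A, hA, subset_rfl, h0.bot_lt, by simpa using prob_le_one (μ := μ) (s := A)⟩
    | succ k ih =>
      obtain ⟨B, hBm, hBA, hB0, hBle⟩ := ih
      obtain ⟨C, hCm, hCB, hC0, hCle⟩ := Diffuse.halve μ hd hBm hB0.ne'
      refine ⟨C, hCm, hCB.trans hBA, hC0, ?_⟩
      calc μ C ≤ μ B / 2 := hCle
        _ ≤ 2⁻¹ ^ k / 2 := by gcongr
        _ = 2⁻¹ ^ (k + 1) := by rw [pow_succ, ENNReal.div_eq_inv_mul, mul_comm]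
  obtain ⟨k, hk⟩ := ENNReal.exists_inv_two_pow_lt hδ
  obtain ⟨B, h1, h2, h3, h4⟩ := key k
  exact ⟨B, h1, h2, h3, h4.trans hk.le⟩

/-- Sierpiński-type exhaustion: a diffuse probability space admits, for every `δ ≠ 0`,
a countable measurable partition into sets of measure at most `δ`. -/
lemma Diffuse.countable_partition (μ : Measure X) [IsProbabilityMeasure μ] (hd : Diffuse μ)
    {δ : ℝ≥0∞} (hδ : δ ≠ 0) :
    ∃ C : ℕ → Set X, (∀ i, MeasurableSet (C i)) ∧ Pairwise (Function.onFun Disjoint C) ∧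
      (⋃ i, C i) = Set.univ ∧ ∀ i, μ (C i) ≤ δ := by
  classical
  set s : Set X → ℝ≥0∞ := fun R => ⨆ (B : Set X) (_ : MeasurableSet B ∧ B ⊆ R ∧ μ B ≤ δ), μ B
    with hs
  have pick : ∀ R : Set X, ∃ B, MeasurableSet B ∧ B ⊆ R ∧ μ B ≤ δ ∧ s R ≤ 2 * μ B := by
    intro R
    rcases eq_or_ne (s R) 0 with h | h
    · exact ⟨∅, MeasurableSet.empty, Set.empty_subset _, by simp, by simp [h]⟩
    · have htop : s R ≠ ∞ := by
        refine ne_top_of_le_ne_top (by simp : (1:ℝ≥0∞) ≠ ∞) ?_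
        exact iSup_le fun B => iSup_le fun _ => prob_le_one
      have hlt : s R / 2 < s R := ENNReal.half_lt_self h htop
      rw [hs] at hlt
      simp only [lt_iSup_iff] at hlt
      obtain ⟨B, ⟨hBm, hBR, hBδ⟩, hB⟩ := hlt
      refine ⟨B, hBm, hBR, hBδ, ?_⟩
      calc s R = s R / 2 * 2 := by
            rw [ENNReal.div_mul_cancel (by norm_num) (by norm_num)]
        _ ≤ μ B * 2 := by gcongr
        _ = 2 * μ B := mul_comm _ _
  choose pk pkm pks pkδ pksup using pick
  let R : ℕ → Set X := fun n => Nat.rec Set.univ (fun _ Rn => Rn \ pk Rn) n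
  have hRs : ∀ n, R (n + 1) = R n \ pk (R n) := fun n => rfl
  set C : ℕ → Set X := fun n => pk (R n) with hC
  have hRm : ∀ n, MeasurableSet (R n) := by
    intro n; induction n with
    | zero => exact MeasurableSet.univ
    | succ n ih => rw [hRs]; exact ih.diff (pkm _)
  have hRmono : ∀ {m n}, m ≤ n → R n ⊆ R m := by
    intro m n h
    induction n with
    | zero => simp_all
    | succ n ih =>
      rcases Nat.lt_or_ge m (n+1) with h' | h'
      · exact (Set.diff_subset).trans (ih (Nat.lt_succ_iff.mp h'))
      · have : m = n + 1 := le_antisymm h h'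
        subst this; rfl
  have hCR : ∀ n, C n ⊆ R n := fun n => pks _
  have hCdisj : ∀ {m n}, m < n → Disjoint (C m) (C n) := by
    intro m n h
    have : C n ⊆ R (m + 1) := (hCR n).trans (hRmono h)
    rw [hRs] at this
    exact Set.disjoint_of_subset_right this Set.disjoint_sdiff_right
  set Z : Set X := Set.univ \ ⋃ n, C n with hZ
  have hZm : MeasurableSet Z := MeasurableSet.univ.diff (MeasurableSet.iUnion fun n => pkm _)
  have hZR : ∀ n, Z ⊆ R n := by
    intro n; induction n with
    | zero => exact Set.subset_univ _
    | succ n ih =>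
      rw [hRs]
      refine Set.subset_diff.mpr ⟨ih, ?_⟩
      exact Set.disjoint_left.mpr fun x hx hxC => hx.2 (Set.mem_iUnion.mpr ⟨n, hxC⟩)
  have hCd : Pairwise (Function.onFun Disjoint C) := by
    intro m n hmn
    rcases lt_or_gt_of_ne hmn with h | h
    · exact hCdisj h
    · exact (hCdisj h).symm
  have htsum : ∑' n, μ (C n) ≠ ∞ := by
    rw [← measure_iUnion hCd fun n => pkm _]
    exact (prob_le_one.trans_lt (by norm_num)).ne
  have hCto0 : Tendsto (fun n => μ (C n)) atTop (𝓝 0) :=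
    ENNReal.tendsto_atTop_zero_of_tsum_ne_top htsum
  have hZ0 : μ Z = 0 := by
    by_contra h0
    obtain ⟨B, hBm, hBZ, hB0, hBδ⟩ := Diffuse.small μ hd hZm h0 hδ
    have hBn : ∀ n, μ B ≤ 2 * μ (C n) := by
      intro n
      refine le_trans ?_ (pksup (R n))
      have : μ B ≤ ⨆ (_ : MeasurableSet B ∧ B ⊆ R n ∧ μ B ≤ δ), μ B :=
        le_iSup_of_le ⟨hBm, hBZ.trans (hZR n), hBδ⟩ le_rfl
      exact this.trans (le_iSup_of_le B le_rfl)
    have h2 : Tendsto (fun n => 2 * μ (C n)) atTop (𝓝 0) := by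
      have : Tendsto (fun n => 2 * μ (C n)) atTop (𝓝 (2 * 0)) :=
        ENNReal.Tendsto.const_mul hCto0 (Or.inr (by norm_num))
      simpa using this
    have : μ B ≤ 0 := ge_of_tendsto' h2 hBn
    exact hB0.ne' (le_antisymm this zero_le)
  refine ⟨fun n => Nat.rec Z (fun m _ => C m) n, ?_, ?_, ?_, ?_⟩
  · intro n; cases n with
    | zero => exact hZm
    | succ n => exact pkm _
  · intro m n hmn
    cases m with
    | zero =>
      cases n with
      | zero => exact absurd rfl hmn
      | succ n =>
        exact Set.disjoint_left.mpr fun x hx hxC => hx.2 (Set.mem_iUnion.mpr ⟨n, hxC⟩)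
    | succ m =>
      cases n with
      | zero =>
        exact (Set.disjoint_left.mpr fun x hx hxC => hx.2 (Set.mem_iUnion.mpr ⟨m, hxC⟩)).symm
      | succ n =>
        exact hCd (fun h => hmn (by rw [h]))
  · rw [← Set.union_iUnion_nat_succ (fun n => Nat.rec Z (fun m _ => C m) n)]
    show Z ∪ ⋃ n, C n = Set.univ
    rw [hZ, Set.diff_union_self, Set.univ_union]
  · intro n; cases n with
    | zero => exact hZ0 ▸ (zero_le : (0:ℝ≥0∞) ≤ δ)
    | succ n => exact pkδ _

end Aux

section Act

variable {G X : Type*} [Group G] [MeasurableSpace X]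

lemma IsPMP.act_preimage {μ : Measure X} {a : G → X → X} (ha : IsPMP μ a)
    (g : G) (B : Set X) : (a g) ⁻¹' B = actSet a g⁻¹ B := by
  ext x
  simp only [Set.mem_preimage, actSet, Set.mem_image]
  constructor
  · intro h
    refine ⟨a g x, h, ?_⟩
    rw [← ha.2.2, inv_mul_cancel, ha.2.1]
  · rintro ⟨y, hy, rfl⟩
    rwa [← ha.2.2, mul_inv_cancel, ha.2.1]

lemma IsPMP.actSet_eq_preimage {μ : Measure X} {a : G → X → X} (ha : IsPMP μ a)
    (g : G) (B : Set X) : actSet a g B = (a g⁻¹) ⁻¹' B := by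
  rw [ha.act_preimage, inv_inv]

lemma IsPMP.actSet_actSet {μ : Measure X} {a : G → X → X} (ha : IsPMP μ a)
    (g h : G) (B : Set X) : actSet a g (actSet a h B) = actSet a (g * h) B := by
  simp only [actSet, Set.image_image]
  exact Set.image_congr fun x _ => (ha.2.2 g h x).symm

end Act

section Chosen

variable {G X : Type*} [MeasurableSpace X]

/-- The statistics of `P` over `F` are within `1/(n+1)` of the rational data `u`. -/
def CloseTo (μ : Measure X) (a : G → X → X) {k : ℕ} {F : Finset G}
    (P : Fin k → Set X) (u : Fin k → Fin k → {f // f ∈ F} → ℚ) (n : ℕ) : Prop :=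
  ∀ (i j : Fin k) (f : {f // f ∈ F}),
    |(μ (P i ∩ actSet a (↑f) (P j))).toReal - (u i j f : ℝ)| < 1 / ((n : ℝ) + 1)

open Classical in
/-- A choice of a measurable partition with statistics close to `u`, if one exists. -/
noncomputable def chosenPart (μ : Measure X) (a : G → X → X) (k : ℕ) (F : Finset G)
    (u : Fin k → Fin k → {f // f ∈ F} → ℚ) (n : ℕ) : Fin k → Set X :=
  if h : ∃ P : Fin k → Set X, IsPartition P ∧ CloseTo μ a P u n then h.choose
  else fun _ => Set.univ

lemma chosenPart_measurable (μ : Measure X) (a : G → X → X) (k : ℕ) (F : Finset G)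
    (u : Fin k → Fin k → {f // f ∈ F} → ℚ) (n : ℕ) (i : Fin k) :
    MeasurableSet (chosenPart μ a k F u n i) := by
  rw [chosenPart]
  split
  · next h => exact h.choose_spec.1.1 i
  · exact MeasurableSet.univ

lemma chosenPart_spec (μ : Measure X) (a : G → X → X) (k : ℕ) (F : Finset G)
    (u : Fin k → Fin k → {f // f ∈ F} → ℚ) (n : ℕ)
    (h : ∃ P : Fin k → Set X, IsPartition P ∧ CloseTo μ a P u n) :
    IsPartition (chosenPart μ a k F u n) ∧ CloseTo μ a (chosenPart μ a k F u n) u n := by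
  rw [chosenPart, dif_pos h]
  exact h.choose_spec

end Chosen

/-- Theorem A. Every pmp action `a` of a countable group on an
atomless probability space has a countably generated, `G`-invariant, atomless
sub-σ-algebra `m` such that the corresponding factor action (the action `a` on
`(X, m, μ|_m)`) is weakly equivalent to `a`.  In particular every pmp action on an
atomless probability space is weakly equivalent to an action on a standard atomless
probability space. -/
theorem weakly_equivalent_standard_factor {G : Type*} [Group G] [Countable G]
    {X : Type*} [m0 : MeasurableSpace X]
    (μ : Measure X) [IsProbabilityMeasure μ]
    (a : G → X → X) (ha : IsPMP μ a) (hd : Diffuse μ) :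
    ∃ (m : MeasurableSpace X) (hm : m ≤ m0),
      (∃ S : Set (Set X), S.Countable ∧ m = MeasurableSpace.generateFrom S) ∧
      (∀ (g : G) (A : Set X), MeasurableSet[m] A → MeasurableSet[m] (actSet a g A)) ∧
      DiffuseOn m μ ∧
      @WC G X X m0 m μ a (μ.trim hm) a ∧
      @WC G X X m m0 (μ.trim hm) a μ a := by
  classical
  have hEex : ∀ n : ℕ, ∃ C : ℕ → Set X, (∀ i, MeasurableSet (C i)) ∧
      Pairwise (Function.onFun Disjoint C) ∧ (⋃ i, C i) = Set.univ ∧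
      ∀ i, μ (C i) ≤ (n : ℝ≥0∞)⁻¹ :=
    fun n => Diffuse.countable_partition μ hd
      (ENNReal.inv_ne_zero.mpr (ENNReal.natCast_ne_top n))
  choose E hEm hEdisj hEuniv hEδ using hEex
  -- the countable generating family
  set S0 : Set (Set X) :=
    (⋃ (n : ℕ) (i : ℕ), {E n i}) ∪
      (⋃ (k : ℕ) (F : Finset G) (u : Fin k → Fin k → {f // f ∈ F} → ℚ) (n : ℕ),
        Set.range (chosenPart μ a k F u n)) with hS0
  have hS0m : ∀ A ∈ S0, MeasurableSet A := by
    intro A hA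
    rw [hS0] at hA
    rcases hA with hA | hA
    · simp only [Set.mem_iUnion, Set.mem_singleton_iff] at hA
      obtain ⟨n, i, rfl⟩ := hA
      exact hEm n i
    · simp only [Set.mem_iUnion, Set.mem_range] at hA
      obtain ⟨k, F, u, n, i, rfl⟩ := hA
      exact chosenPart_measurable μ a k F u n i
  have hS0c : S0.Countable := by
    apply Set.Countable.union
    · exact Set.countable_iUnion fun n => Set.countable_iUnion fun i => Set.countable_singleton _
    · refine Set.countable_iUnion fun k => Set.countable_iUnion fun F =>
        Set.countable_iUnion fun u => Set.countable_iUnion fun n => Set.countable_range _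
  set S : Set (Set X) := ⋃ g : G, (actSet a g) '' S0 with hSdef
  have hSc : S.Countable :=
    Set.countable_iUnion fun g => hS0c.image _
  have hmemS : ∀ (g : G), ∀ A ∈ S0, actSet a g A ∈ S := by
    intro g A hA
    exact Set.mem_iUnion.mpr ⟨g, Set.mem_image_of_mem _ hA⟩
  have hS0S : S0 ⊆ S := by
    intro A hA
    have h1 : actSet a (1 : G) A = A := by
      have : a (1 : G) = id := funext ha.2.1
      simp [actSet, this]
    exact h1 ▸ hmemS 1 A hA
  have hm : MeasurableSpace.generateFrom S ≤ m0 := by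
    refine MeasurableSpace.generateFrom_le ?_
    intro B hB
    rw [hSdef] at hB
    simp only [Set.mem_iUnion, Set.mem_image] at hB
    obtain ⟨g, A, hA, rfl⟩ := hB
    have h1 : MeasurableSet ((a g⁻¹) ⁻¹' A) := (ha.1 g⁻¹).measurable (hS0m A hA)
    rwa [← ha.actSet_eq_preimage] at h1
  have hSm : ∀ A ∈ S, MeasurableSet[MeasurableSpace.generateFrom S] A := fun A hA =>
    MeasurableSpace.measurableSet_generateFrom hA
  -- G-invariance
  have hmeas : ∀ g : G,
      @Measurable X X (MeasurableSpace.generateFrom S) (MeasurableSpace.generateFrom S) (a g) := by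
    intro g
    refine @measurable_generateFrom X X (MeasurableSpace.generateFrom S) S (a g) ?_
    intro t ht
    rw [hSdef] at ht
    simp only [Set.mem_iUnion, Set.mem_image] at ht
    obtain ⟨g', A, hA, rfl⟩ := ht
    have h1 : (a g) ⁻¹' (actSet a g' A) = actSet a (g⁻¹ * g') A := by
      rw [ha.act_preimage, ha.actSet_actSet]
    have h2 : MeasurableSet[MeasurableSpace.generateFrom S] (actSet a (g⁻¹ * g') A) :=
      MeasurableSpace.measurableSet_generateFrom (hmemS _ A hA)
    rwa [← h1] at h2
  have hinv : ∀ (g : G) (A : Set X), MeasurableSet[MeasurableSpace.generateFrom S] A →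
      MeasurableSet[MeasurableSpace.generateFrom S] (actSet a g A) := by
    intro g A hA
    have h1 := hmeas g⁻¹ hA
    rwa [← ha.actSet_eq_preimage] at h1
  refine ⟨MeasurableSpace.generateFrom S, hm, ⟨S, hSc, rfl⟩, hinv, ?_, ?_, ?_⟩
  · -- DiffuseOn
    intro A hA h0
    obtain ⟨n, hn⟩ := ENNReal.exists_inv_nat_lt h0
    have hAm0 : MeasurableSet A := hm _ hA
    have hsum : μ A = ∑' i, μ (A ∩ E n i) := by
      have hdecomp : A = ⋃ i, A ∩ E n i := by
        rw [← Set.inter_iUnion, hEuniv n, Set.inter_univ]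
      conv_lhs => rw [hdecomp]
      rw [measure_iUnion]
      · intro i j hij
        exact Set.disjoint_of_subset Set.inter_subset_right Set.inter_subset_right
          (hEdisj n hij)
      · exact fun i => hAm0.inter (hEm n i)
    have hex : ∃ i, μ (A ∩ E n i) ≠ 0 := by
      by_contra hcon
      push_neg at hcon
      rw [hsum] at h0
      exact h0 (by simp [hcon])
    obtain ⟨i, hi⟩ := hex
    refine ⟨A ∩ E n i, ?_, Set.inter_subset_left, hi.bot_lt, ?_⟩
    · refine MeasurableSet.inter hA (hSm _ (hS0S ?_))
      rw [hS0]
      exact Or.inl (Set.mem_iUnion.mpr ⟨n, Set.mem_iUnion.mpr ⟨i, rfl⟩⟩)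
    · calc μ (A ∩ E n i) ≤ μ (E n i) := measure_mono Set.inter_subset_right
        _ ≤ (n : ℝ≥0∞)⁻¹ := hEδ n i
        _ < μ A := hn
  · -- a ≺ factor
    intro ε hε F k P hP
    set M : ℝ := ((k * k * F.card : ℕ) : ℝ) with hM
    have hM0 : 0 ≤ M := by positivity
    obtain ⟨n, hn⟩ := exists_nat_gt (2 * M / ε)
    have hbound : M * (2 / ((n : ℝ) + 1)) ≤ ε := by
      rw [div_lt_iff₀ hε] at hn
      have hn1 : (0 : ℝ) < (n : ℝ) + 1 := by positivity
      rw [show M * (2 / ((n : ℝ) + 1)) = 2 * M / ((n : ℝ) + 1) from by ring,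
        div_le_iff₀ hn1]
      nlinarith [hε.le]
    have hu : ∀ (i j : Fin k) (f : {f // f ∈ F}), ∃ q : ℚ,
        |(μ (P i ∩ actSet a (↑f) (P j))).toReal - (q : ℝ)| < 1 / ((n : ℝ) + 1) := by
      intro i j f
      exact exists_rat_near _ (by positivity)
    choose u hu using hu
    have hex : ∃ P' : Fin k → Set X, IsPartition P' ∧ CloseTo μ a P' u n := ⟨P, hP, hu⟩
    obtain ⟨hQpart, hQclose⟩ := chosenPart_spec μ a k F u n hex
    set Q := chosenPart μ a k F u n with hQdef
    have hQS0 : ∀ i, Q i ∈ S0 := by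
      intro i
      rw [hS0]
      exact Or.inr (Set.mem_iUnion.mpr ⟨k, Set.mem_iUnion.mpr ⟨F, Set.mem_iUnion.mpr
        ⟨u, Set.mem_iUnion.mpr ⟨n, Set.mem_range_self i⟩⟩⟩⟩)
    have hQm : ∀ i, MeasurableSet[MeasurableSpace.generateFrom S] (Q i) :=
      fun i => hSm _ (hS0S (hQS0 i))
    refine ⟨Q, ⟨hQm, hQpart.2.1, hQpart.2.2⟩, ?_⟩
    have htrim : ∀ (i j : Fin k) (f : G),
        ((μ.trim hm) (Q i ∩ actSet a f (Q j))).toReal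
          = (μ (Q i ∩ actSet a f (Q j))).toReal := by
      intro i j f
      rw [trim_measurableSet_eq hm (MeasurableSet.inter (hQm i) (hinv f _ (hQm j)))]
    have hterm : ∀ (i j : Fin k), ∀ f ∈ F,
        |(μ (P i ∩ actSet a f (P j))).toReal - ((μ.trim hm) (Q i ∩ actSet a f (Q j))).toReal|
          ≤ 2 / ((n : ℝ) + 1) := by
      intro i j f hf
      rw [htrim i j f]
      have h1 := hu i j ⟨f, hf⟩
      have h2 := hQclose i j ⟨f, hf⟩
      calc |(μ (P i ∩ actSet a f (P j))).toReal - (μ (Q i ∩ actSet a f (Q j))).toReal|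
          ≤ |(μ (P i ∩ actSet a f (P j))).toReal - (u i j ⟨f, hf⟩ : ℝ)| +
            |(μ (Q i ∩ actSet a f (Q j))).toReal - (u i j ⟨f, hf⟩ : ℝ)| := by
            rw [← abs_sub_comm ((u i j ⟨f, hf⟩ : ℝ)) ((μ (Q i ∩ actSet a f (Q j))).toReal)]
            exact abs_sub_le _ _ _
        _ ≤ 1 / ((n : ℝ) + 1) + 1 / ((n : ℝ) + 1) := add_le_add h1.le h2.le
        _ = 2 / ((n : ℝ) + 1) := by ring
    have hfinal : (∑ i : Fin k, ∑ j : Fin k, ∑ f ∈ F,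
        |(μ (P i ∩ actSet a f (P j))).toReal -
          ((μ.trim hm) (Q i ∩ actSet a f (Q j))).toReal|) ≤ ε := by
      calc (∑ i : Fin k, ∑ j : Fin k, ∑ f ∈ F,
          |(μ (P i ∩ actSet a f (P j))).toReal -
            ((μ.trim hm) (Q i ∩ actSet a f (Q j))).toReal|)
          ≤ ∑ _i : Fin k, ∑ _j : Fin k, ∑ _f ∈ F, (2 / ((n : ℝ) + 1)) := by
            refine Finset.sum_le_sum fun i _ => Finset.sum_le_sum fun j _ =>
              Finset.sum_le_sum fun f hf => hterm i j f hf
        _ = M * (2 / ((n : ℝ) + 1)) := by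
            simp only [Finset.sum_const, Finset.card_univ, Fintype.card_fin, nsmul_eq_mul, hM]
            push_cast
            ring
        _ ≤ ε := hbound
    exact hfinal
  · -- factor ≺ a
    intro ε hε F k P hP
    refine ⟨P, ⟨fun i => hm _ (hP.1 i), hP.2.1, hP.2.2⟩, ?_⟩
    have hz : (∑ i : Fin k, ∑ j : Fin k, ∑ f ∈ F,
        |((μ.trim hm) (P i ∩ actSet a f (P j))).toReal -
          (μ (P i ∩ actSet a f (P j))).toReal|) = 0 := by
      refine Finset.sum_eq_zero fun i _ => Finset.sum_eq_zero fun j _ =>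
        Finset.sum_eq_zero fun f _ => ?_
      rw [trim_measurableSet_eq hm (MeasurableSet.inter (hP.1 i) (hinv f _ (hP.1 j))),
        sub_self, abs_zero]
    exact le_trans (le_of_eq hz) hε.le
end

section
/- Let a and b be pmp actions of a countable group G on probability spaces. Then a ≺ b if and only if for every finite measurable partition α of X_a, every finite subset F ⊆ G containing the identity, and every δ > 0, there exists an (α, F, δ)-homomorphism from a to b. -/
open MeasureTheory Filter Topology
open scoped ENNReal symmDiff



/-! ### Auxiliary lemmas -/

section pmpHelpers
variable {G X : Type*} [Group G] [MeasurableSpace X] {μ : Measure X} {a : G → X → X}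

lemma IsPMP.leftInv (h : IsPMP μ a) (g : G) (x : X) : a g⁻¹ (a g x) = x := by
  rw [← h.2.2, inv_mul_cancel, h.2.1]

lemma IsPMP.rightInv (h : IsPMP μ a) (g : G) (x : X) : a g (a g⁻¹ x) = x := by
  have := h.leftInv g⁻¹ x; rwa [inv_inv] at this

lemma IsPMP.injective (h : IsPMP μ a) (g : G) : Function.Injective (a g) := by
  intro x y hxy
  have := congrArg (a g⁻¹) hxy
  rwa [h.leftInv, h.leftInv] at this

lemma IsPMP.actSet_eq (h : IsPMP μ a) (g : G) (A : Set X) :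
    actSet a g A = a g⁻¹ ⁻¹' A := by
  ext x
  constructor
  · rintro ⟨y, hy, rfl⟩; simpa [h.leftInv] using hy
  · intro hx; exact ⟨a g⁻¹ x, hx, h.rightInv g x⟩

lemma IsPMP.measurableSet_actSet (h : IsPMP μ a) (g : G) {A : Set X}
    (hA : MeasurableSet A) : MeasurableSet (actSet a g A) := by
  rw [h.actSet_eq]; exact (h.1 g⁻¹).measurable hA

lemma IsPMP.measure_actSet (h : IsPMP μ a) (g : G) {A : Set X}
    (hA : MeasurableSet A) : μ (actSet a g A) = μ A := by
  rw [h.actSet_eq]; exact (h.1 g⁻¹).measure_preimage hA.nullMeasurableSet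

lemma IsPMP.actSet_one (h : IsPMP μ a) (A : Set X) : actSet a 1 A = A := by
  ext x; simp [actSet, h.2.1]

omit [Group G] [MeasurableSpace X] in
lemma actSet_iUnion {ι : Sort*} (a : G → X → X) (g : G) (s : ι → Set X) :
    actSet a g (⋃ i, s i) = ⋃ i, actSet a g (s i) := Set.image_iUnion

lemma IsPMP.actSet_univ (h : IsPMP μ a) (g : G) : actSet a g Set.univ = Set.univ := by
  apply Set.eq_univ_of_forall; intro x; exact ⟨a g⁻¹ x, trivial, h.rightInv g x⟩

lemma IsPMP.disjoint_actSet (h : IsPMP μ a) (g : G) {A B : Set X} (hd : Disjoint A B) :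
    Disjoint (actSet a g A) (actSet a g B) :=
  (Set.disjoint_image_iff (h.injective g)).2 hd

lemma IsPMP.actSet_inter (h : IsPMP μ a) (g : G) (A B : Set X) :
    actSet a g (A ∩ B) = actSet a g A ∩ actSet a g B :=
  Set.image_inter (h.injective g)

lemma IsPMP.actSet_symmDiff (h : IsPMP μ a) (g : G) (A B : Set X) :
    actSet a g (A ∆ B) = actSet a g A ∆ actSet a g B := by
  simp only [Set.symmDiff_def, actSet, Set.image_union, Set.image_diff (h.injective g)]

lemma refine_pairwise_disjoint (h : IsPMP μ a) {k : ℕ} {P : Fin k → Set X}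
    (hP : IsPartition P) (F : Finset G) :
    Pairwise (Function.onFun Disjoint
      (fun σ : ↥F → Fin k => ⋂ f : ↥F, actSet a (f : G) (P (σ f)))) := by
  intro σ τ hne
  have : ∃ f : ↥F, σ f ≠ τ f := by
    by_contra hc
    push_neg at hc
    exact hne (funext hc)
  obtain ⟨f, hf⟩ := this
  exact Disjoint.mono (Set.iInter_subset _ f) (Set.iInter_subset _ f)
    (h.disjoint_actSet (f : G) (hP.2.1 hf))

lemma refine_measurable (h : IsPMP μ a) {k : ℕ} {P : Fin k → Set X}
    (hP : IsPartition P) (F : Finset G) (σ : ↥F → Fin k) :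
    MeasurableSet (⋂ f : ↥F, actSet a (f : G) (P (σ f))) :=
  MeasurableSet.iInter fun f => h.measurableSet_actSet _ (hP.1 _)

lemma refine_biUnion (h : IsPMP μ a) {k : ℕ} {P : Fin k → Set X}
    (hP : IsPartition P) (F : Finset G) (f₀ : ↥F) (i : Fin k) :
    (⋃ σ : ↥F → Fin k, ⋃ (_ : σ f₀ = i), ⋂ f : ↥F, actSet a (f : G) (P (σ f)))
      = actSet a (f₀ : G) (P i) := by
  apply subset_antisymm
  · simp only [Set.iUnion_subset_iff]
    intro σ hσ
    refine (Set.iInter_subset _ f₀).trans ?_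
    rw [hσ]
  · intro x hx
    have hex : ∀ f : ↥F, ∃ j, x ∈ actSet a (f : G) (P j) := by
      intro f
      have hx2 : x ∈ actSet a (f : G) (⋃ j, P j) := by
        rw [hP.2.2, h.actSet_univ]; trivial
      rw [actSet_iUnion] at hx2
      exact Set.mem_iUnion.1 hx2
    classical
    refine Set.mem_iUnion.2 ⟨fun f => if hf : f = f₀ then i else Classical.choose (hex f),
      Set.mem_iUnion.2 ⟨by simp, ?_⟩⟩
    refine Set.mem_iInter.2 fun f => ?_
    by_cases hf : f = f₀
    · subst hf; simpa using hx
    · simpa [hf] using Classical.choose_spec (hex f)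

lemma refine_cover (h : IsPMP μ a) {k : ℕ} {P : Fin k → Set X}
    (hP : IsPartition P) (F : Finset G) (f₀ : ↥F) :
    (⋃ σ : ↥F → Fin k, ⋂ f : ↥F, actSet a (f : G) (P (σ f))) = Set.univ := by
  have hsplit : (⋃ σ : ↥F → Fin k, ⋂ f : ↥F, actSet a (f : G) (P (σ f)))
      = ⋃ i : Fin k, ⋃ σ : ↥F → Fin k, ⋃ (_ : σ f₀ = i),
          ⋂ f : ↥F, actSet a (f : G) (P (σ f)) := by
    ext x
    simp only [Set.mem_iUnion]
    constructor
    · rintro ⟨σ, hx⟩; exact ⟨σ f₀, σ, rfl, hx⟩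
    · rintro ⟨i, σ, _, hx⟩; exact ⟨σ, hx⟩
  rw [hsplit]
  have : ∀ i : Fin k, (⋃ σ : ↥F → Fin k, ⋃ (_ : σ f₀ = i),
      ⋂ f : ↥F, actSet a (f : G) (P (σ f))) = actSet a (f₀ : G) (P i) :=
    fun i => refine_biUnion h hP F f₀ i
  rw [Set.iUnion_congr this, ← actSet_iUnion, hP.2.2, h.actSet_univ]

end pmpHelpers

section sumHelpers
variable {Y ι κ : Type*} [MeasurableSpace Y]

lemma iUnion_cond_inter {α : Type*} {S : ι → Set α}
    (h : Pairwise (Function.onFun Disjoint S)) (p q : ι → Prop) :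
    (⋃ i, ⋃ (_ : p i), S i) ∩ (⋃ i, ⋃ (_ : q i), S i)
      = ⋃ i, ⋃ (_ : p i ∧ q i), S i := by
  ext x
  simp only [Set.mem_inter_iff, Set.mem_iUnion, exists_prop]
  constructor
  · rintro ⟨⟨i, hi, hx⟩, ⟨j, hj, hx'⟩⟩
    rcases eq_or_ne i j with rfl | hij
    · exact ⟨i, ⟨hi, hj⟩, hx⟩
    · exact absurd hx' (Set.disjoint_left.1 (h hij) hx)
  · rintro ⟨i, ⟨hi, hj⟩, hx⟩; exact ⟨⟨i, hi, hx⟩, ⟨i, hj, hx⟩⟩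

lemma iUnion_cond_inter' {α : Type*} (S : ι → Set α) (T : κ → Set α)
    (p : ι → Prop) (q : κ → Prop) :
    (⋃ i, ⋃ (_ : p i), S i) ∩ (⋃ j, ⋃ (_ : q j), T j)
      = ⋃ pr : ι × κ, ⋃ (_ : p pr.1 ∧ q pr.2), (S pr.1 ∩ T pr.2) := by
  ext x
  simp only [Set.mem_inter_iff, Set.mem_iUnion, exists_prop, Prod.exists]
  constructor
  · rintro ⟨⟨i, hi, hx⟩, ⟨j, hj, hx'⟩⟩; exact ⟨i, j, ⟨hi, hj⟩, hx, hx'⟩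
  · rintro ⟨i, j, ⟨hi, hj⟩, hx, hx'⟩; exact ⟨⟨i, hi, hx⟩, ⟨j, hj, hx'⟩⟩

lemma pairwise_disjoint_prod {α : Type*} {S : ι → Set α} {T : κ → Set α}
    (hS : Pairwise (Function.onFun Disjoint S)) (hT : Pairwise (Function.onFun Disjoint T)) :
    Pairwise (Function.onFun Disjoint (fun pr : ι × κ => S pr.1 ∩ T pr.2)) := by
  rintro ⟨i, j⟩ ⟨i', j'⟩ hne
  rcases eq_or_ne i i' with rfl | hii
  · have hjj : j ≠ j' := fun h => hne (by simp [h])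
    exact Disjoint.mono Set.inter_subset_right Set.inter_subset_right (hT hjj)
  · exact Disjoint.mono Set.inter_subset_left Set.inter_subset_left (hS hii)

lemma toReal_measure_iUnion_cond [Fintype ι] (ν : Measure Y) [IsFiniteMeasure ν]
    {S : ι → Set Y} (hd : Pairwise (Function.onFun Disjoint S))
    (hm : ∀ i, MeasurableSet (S i)) (p : ι → Prop) [DecidablePred p] :
    (ν (⋃ i, ⋃ (_ : p i), S i)).toReal = ∑ i ∈ Finset.univ.filter p, (ν (S i)).toReal := by
  have hset : (⋃ i, ⋃ (_ : p i), S i) = ⋃ i ∈ Finset.univ.filter p, S i := by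
    ext x; simp
  rw [hset, measure_biUnion_finset ?_ (fun i _ => hm i), ENNReal.toReal_sum
    (fun i _ => measure_ne_top ν _)]
  intro x _ y _ hxy; exact hd hxy

lemma toReal_measure_symmDiff (ν : Measure Y) [IsFiniteMeasure ν] {A B : Set Y}
    (hA : MeasurableSet A) (hB : MeasurableSet B) :
    (ν (A ∆ B)).toReal = (ν A).toReal + (ν B).toReal - 2 * (ν (A ∩ B)).toReal := by
  have h1 : ν (A ∩ B) + ν (A \ B) = ν A := measure_inter_add_diff A hB
  have h2 : ν (B ∩ A) + ν (B \ A) = ν B := measure_inter_add_diff B hA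
  rw [Set.inter_comm] at h2
  have h3 : ν (A ∆ B) = ν (A \ B) + ν (B \ A) := by
    rw [Set.symmDiff_def]
    exact measure_union (disjoint_sdiff_sdiff) (hB.diff hA)
  have e1 := congrArg ENNReal.toReal h1
  have e2 := congrArg ENNReal.toReal h2
  have e3 := congrArg ENNReal.toReal h3
  rw [ENNReal.toReal_add (measure_ne_top _ _) (measure_ne_top _ _)] at e1 e2 e3
  linarith

lemma symmDiff_inter_subset {α : Type*} (A B C D : Set α) :
    (A ∩ B) ∆ (C ∩ D) ⊆ (A ∆ C) ∪ (B ∆ D) := by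
  intro x hx
  simp only [Set.mem_symmDiff, Set.mem_union, Set.mem_inter_iff] at hx ⊢
  tauto

lemma IsPartition.k_pos {k : ℕ} (ν : Measure Y) [IsProbabilityMeasure ν]
    {P : Fin k → Set Y} (hP : IsPartition P) : 0 < k := by
  by_contra hc
  push_neg at hc
  interval_cases k
  have h0 : (Set.univ : Set Y) = ∅ := by rw [← hP.2.2]; simp
  have : ν Set.univ = 1 := measure_univ
  rw [h0] at this
  simp at this

end sumHelpers

/-- `a ≺ b` iff for every finite partition `P` of `X_a`, every finite
`F ⊆ G` containing the identity and every `δ > 0` there is an `(P, F, δ)`-homomorphism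
from `a` to `b`: a family of pairwise disjoint measurable sets `φ σ ⊆ X_b`, indexed by
the atoms `⋂_{f ∈ F} f · P (σ f)` of the partition generated by the `F`-translates of
`P`, which is almost equivariant and almost measure-preserving. -/
theorem wc_iff_exists_homomorphisms {G : Type*} [Group G] [Countable G]
    {X Y : Type*} [MeasurableSpace X] [MeasurableSpace Y]
    (μ : Measure X) [IsProbabilityMeasure μ] (a : G → X → X) (ha : IsPMP μ a)
    (ν : Measure Y) [IsProbabilityMeasure ν] (b : G → Y → Y) (hb : IsPMP ν b) :
    WC μ a ν b ↔
      ∀ (k : ℕ) (P : Fin k → Set X), IsPartition P →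
        ∀ (F : Finset G) (h1 : (1 : G) ∈ F), ∀ δ : ℝ, 0 < δ →
          ∃ φ : (↥F → Fin k) → Set Y,
            (∀ σ, MeasurableSet (φ σ)) ∧
            Pairwise (Function.onFun Disjoint φ) ∧
            (∀ (f : ↥F) (i : Fin k),
              (ν ((actSet b (f : G) (⋃ (σ : ↥F → Fin k) (_ : σ ⟨1, h1⟩ = i), φ σ)) ∆
                  (⋃ (σ : ↥F → Fin k) (_ : σ f = i), φ σ))).toReal < δ) ∧
            (∑' σ : ↥F → Fin k,
              |(ν (φ σ)).toReal -
                (μ (⋂ f : ↥F, actSet a (f : G) (P (σ f)))).toReal| < δ) := by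
  constructor
  · -- WC → homomorphisms
    intro hWC k P hP F h1 δ hδ
    classical
    haveI : Fintype (↥F → Fin k) := Fintype.ofFinite _
    set Pbar : (↥F → Fin k) → Set X := fun σ => ⋂ f : ↥F, actSet a (f : G) (P (σ f))
      with hPbardef
    set m := Fintype.card (↥F → Fin k) with hmdef
    set e : (↥F → Fin k) ≃ Fin m := Fintype.equivFin _ with hedef
    set Pb : Fin m → Set X := fun n => Pbar (e.symm n) with hPbdef
    have hPbar_m : ∀ σ, MeasurableSet (Pbar σ) := refine_measurable ha hP F
    have hPbar_d : Pairwise (Function.onFun Disjoint Pbar) := refine_pairwise_disjoint ha hP F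
    have hPbpart : IsPartition Pb := by
      refine ⟨fun n => hPbar_m _, fun n n' hnn => hPbar_d fun hc => hnn (e.symm.injective hc), ?_⟩
      exact (e.symm.surjective.iUnion_comp Pbar).trans (refine_cover ha hP F ⟨1, h1⟩)
    obtain ⟨Qb, hQbpart, hstat⟩ := hWC (δ / 5) (by linarith) F m Pb hPbpart
    set φ : (↥F → Fin k) → Set Y := fun σ => Qb (e σ) with hφdef
    have hφm : ∀ σ, MeasurableSet (φ σ) := fun σ => hQbpart.1 _
    have hφd : Pairwise (Function.onFun Disjoint φ) :=
      fun σ τ h => hQbpart.2.1 fun hc => h (e.injective hc)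
    have key : ∀ f ∈ F, (∑ σ : ↥F → Fin k, ∑ τ : ↥F → Fin k,
        |(μ (Pbar σ ∩ actSet a f (Pbar τ))).toReal -
          (ν (φ σ ∩ actSet b f (φ τ))).toReal|) ≤ δ / 5 := by
      intro f hf
      have hre : (∑ σ : ↥F → Fin k, ∑ τ : ↥F → Fin k,
          |(μ (Pbar σ ∩ actSet a f (Pbar τ))).toReal - (ν (φ σ ∩ actSet b f (φ τ))).toReal|)
          = ∑ i : Fin m, ∑ j : Fin m,
            |(μ (Pb i ∩ actSet a f (Pb j))).toReal -
              (ν (Qb i ∩ actSet b f (Qb j))).toReal| := by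
        refine Fintype.sum_equiv e _ _ fun σ => ?_
        refine Fintype.sum_equiv e _ _ fun τ => ?_
        simp only [hPbdef, hφdef, Equiv.symm_apply_apply]
      rw [hre]
      refine le_trans ?_ hstat
      unfold statDist
      refine Finset.sum_le_sum fun i _ => Finset.sum_le_sum fun j _ => ?_
      exact Finset.single_le_sum (f := fun g => |(μ (Pb i ∩ actSet a g (Pb j))).toReal -
        (ν (Qb i ∩ actSet b g (Qb j))).toReal|) (fun g _ => abs_nonneg _) hf
    have hdiag : (∑ σ : ↥F → Fin k, |(ν (φ σ)).toReal - (μ (Pbar σ)).toReal|) ≤ δ / 5 := by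
      have heq : (∑ σ : ↥F → Fin k, |(ν (φ σ)).toReal - (μ (Pbar σ)).toReal|)
          = ∑ σ : ↥F → Fin k, |(μ (Pbar σ ∩ actSet a 1 (Pbar σ))).toReal -
              (ν (φ σ ∩ actSet b 1 (φ σ))).toReal| := by
        refine Finset.sum_congr rfl fun σ _ => ?_
        rw [ha.actSet_one, hb.actSet_one, Set.inter_self, Set.inter_self, abs_sub_comm]
      rw [heq]
      refine le_trans (Finset.sum_le_sum fun σ _ => ?_) (key 1 h1)
      exact Finset.single_le_sum (f := fun τ => |(μ (Pbar σ ∩ actSet a 1 (Pbar τ))).toReal -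
        (ν (φ σ ∩ actSet b 1 (φ τ))).toReal|) (fun τ _ => abs_nonneg _) (Finset.mem_univ σ)
    refine ⟨φ, hφm, hφd, ?_, ?_⟩
    · intro f i
      set U : Set Y := ⋃ σ, ⋃ (_ : σ ⟨1, h1⟩ = i), φ σ with hU
      set V : Set Y := ⋃ σ, ⋃ (_ : σ f = i), φ σ with hV
      have hUm : MeasurableSet U :=
        MeasurableSet.iUnion fun σ => MeasurableSet.iUnion fun _ => hφm σ
      have hVm : MeasurableSet V :=
        MeasurableSet.iUnion fun σ => MeasurableSet.iUnion fun _ => hφm σ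
      have hfUm : MeasurableSet (actSet b (f : G) U) := hb.measurableSet_actSet _ hUm
      rw [toReal_measure_symmDiff ν hfUm hVm]
      have hfU_eq : (ν (actSet b (f : G) U)).toReal = (ν U).toReal :=
        congrArg ENNReal.toReal (hb.measure_actSet _ hUm)
      have hUval : (ν U).toReal
          = ∑ σ ∈ Finset.univ.filter (fun σ => σ ⟨1, h1⟩ = i), (ν (φ σ)).toReal :=
        toReal_measure_iUnion_cond ν hφd hφm _
      have hPUval : (μ (P i)).toReal
          = ∑ σ ∈ Finset.univ.filter (fun σ => σ ⟨1, h1⟩ = i), (μ (Pbar σ)).toReal := by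
        have h2 : (⋃ σ, ⋃ (_ : σ (⟨1, h1⟩ : ↥F) = i), Pbar σ)
            = actSet a ((⟨1, h1⟩ : ↥F) : G) (P i) := refine_biUnion ha hP F _ i
        have h3 : actSet a ((⟨1, h1⟩ : ↥F) : G) (P i) = P i := ha.actSet_one (P i)
        rw [← h3, ← h2]
        exact toReal_measure_iUnion_cond μ hPbar_d hPbar_m _
      have hUbound : |(ν U).toReal - (μ (P i)).toReal| ≤ δ / 5 := by
        rw [hUval, hPUval, ← Finset.sum_sub_distrib]
        refine le_trans (Finset.abs_sum_le_sum_abs _ _) ?_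
        exact le_trans (Finset.sum_le_sum_of_subset_of_nonneg (Finset.filter_subset _ _)
          (fun _ _ _ => abs_nonneg _)) hdiag
      have hVval : (ν V).toReal
          = ∑ σ ∈ Finset.univ.filter (fun σ => σ f = i), (ν (φ σ)).toReal :=
        toReal_measure_iUnion_cond ν hφd hφm _
      have hPVval : (μ (P i)).toReal
          = ∑ σ ∈ Finset.univ.filter (fun σ => σ f = i), (μ (Pbar σ)).toReal := by
        rw [← congrArg ENNReal.toReal (ha.measure_actSet (f : G) (hP.1 i)),
          ← refine_biUnion ha hP F f i]
        exact toReal_measure_iUnion_cond μ hPbar_d hPbar_m _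
      have hVbound : |(ν V).toReal - (μ (P i)).toReal| ≤ δ / 5 := by
        rw [hVval, hPVval, ← Finset.sum_sub_distrib]
        refine le_trans (Finset.abs_sum_le_sum_abs _ _) ?_
        exact le_trans (Finset.sum_le_sum_of_subset_of_nonneg (Finset.filter_subset _ _)
          (fun _ _ _ => abs_nonneg _)) hdiag
      have hfU2 : actSet b (f : G) U
          = ⋃ τ, ⋃ (_ : τ (⟨1, h1⟩ : ↥F) = i), actSet b (f : G) (φ τ) := by
        rw [hU, actSet_iUnion]
        exact Set.iUnion_congr fun τ => actSet_iUnion b _ _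
      have hfφd : Pairwise (Function.onFun Disjoint (fun τ => actSet b (f : G) (φ τ))) :=
        fun τ τ' h => hb.disjoint_actSet _ (hφd h)
      have hfPbard : Pairwise (Function.onFun Disjoint (fun τ => actSet a (f : G) (Pbar τ))) :=
        fun τ τ' h => ha.disjoint_actSet _ (hPbar_d h)
      have hUVval : (ν (actSet b (f : G) U ∩ V)).toReal
          = ∑ pr ∈ Finset.univ.filter
              (fun pr : (↥F → Fin k) × (↥F → Fin k) => pr.1 ⟨1, h1⟩ = i ∧ pr.2 f = i),
              (ν (actSet b (f : G) (φ pr.1) ∩ φ pr.2)).toReal := by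
        rw [hfU2, hV, iUnion_cond_inter']
        exact toReal_measure_iUnion_cond ν (pairwise_disjoint_prod hfφd hφd)
          (fun pr => (hb.measurableSet_actSet _ (hφm _)).inter (hφm _)) _
      have hPprod : (μ (P i)).toReal
          = ∑ pr ∈ Finset.univ.filter
              (fun pr : (↥F → Fin k) × (↥F → Fin k) => pr.1 ⟨1, h1⟩ = i ∧ pr.2 f = i),
              (μ (actSet a (f : G) (Pbar pr.1) ∩ Pbar pr.2)).toReal := by
        have hA : (⋃ τ, ⋃ (_ : τ (⟨1, h1⟩ : ↥F) = i), actSet a (f : G) (Pbar τ))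
            = actSet a (f : G) (P i) := by
          have hstep : (⋃ τ, ⋃ (_ : τ (⟨1, h1⟩ : ↥F) = i), actSet a (f : G) (Pbar τ))
              = actSet a (f : G) (⋃ τ, ⋃ (_ : τ (⟨1, h1⟩ : ↥F) = i), Pbar τ) := by
            rw [actSet_iUnion]
            exact (Set.iUnion_congr fun τ => (actSet_iUnion a _ _)).symm
          rw [hstep, refine_biUnion ha hP F _ i]
          exact congrArg _ (ha.actSet_one (P i))
        have hB : (⋃ σ, ⋃ (_ : σ f = i), Pbar σ) = actSet a (f : G) (P i) :=
          refine_biUnion ha hP F f i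
        have hI : actSet a (f : G) (P i)
            = (⋃ τ, ⋃ (_ : τ (⟨1, h1⟩ : ↥F) = i), actSet a (f : G) (Pbar τ))
              ∩ (⋃ σ, ⋃ (_ : σ f = i), Pbar σ) := by
          rw [hA, hB, Set.inter_self]
        rw [← congrArg ENNReal.toReal (ha.measure_actSet (f : G) (hP.1 i)), hI,
          iUnion_cond_inter']
        exact toReal_measure_iUnion_cond μ (pairwise_disjoint_prod hfPbard hPbar_d)
          (fun pr => (ha.measurableSet_actSet _ (hPbar_m _)).inter (hPbar_m _)) _
      have hUVbound : |(ν (actSet b (f : G) U ∩ V)).toReal - (μ (P i)).toReal| ≤ δ / 5 := by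
        rw [hUVval, hPprod, ← Finset.sum_sub_distrib]
        refine le_trans (Finset.abs_sum_le_sum_abs _ _) ?_
        refine le_trans (Finset.sum_le_sum_of_subset_of_nonneg (Finset.filter_subset _ _)
          (fun _ _ _ => abs_nonneg _)) ?_
        refine le_trans (le_of_eq ?_) (key (f : G) f.2)
        rw [Fintype.sum_prod_type, Finset.sum_comm]
        refine Finset.sum_congr rfl fun σ _ => Finset.sum_congr rfl fun τ _ => ?_
        rw [abs_sub_comm, Set.inter_comm (actSet a (f : G) (Pbar τ)),
          Set.inter_comm (actSet b (f : G) (φ τ))]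
      rw [hfU_eq]
      have b1 := abs_le.1 hUbound
      have b2 := abs_le.1 hVbound
      have b3 := abs_le.1 hUVbound
      linarith [b1.1, b1.2, b2.1, b2.2, b3.1, b3.2]
    · rw [tsum_fintype]
      exact lt_of_le_of_lt hdiag (by linarith)
  · -- homomorphisms → WC
    intro hH ε hε F k P hP
    classical
    have hk : 0 < k := hP.k_pos μ
    set F' : Finset G := insert 1 F with hF'def
    have h1 : (1 : G) ∈ F' := Finset.mem_insert_self 1 F
    haveI : Fintype (↥F' → Fin k) := Fintype.ofFinite _
    set δ := ε / (4 * ((k : ℝ) ^ 2 + 1) * ((F.card : ℝ) + 1)) with hδdef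
    have hδ : 0 < δ := by positivity
    obtain ⟨φ, hφm, hφd, hequiv, hsum⟩ := hH k P hP F' h1 δ hδ
    rw [tsum_fintype] at hsum
    set Pbar : (↥F' → Fin k) → Set X := fun σ => ⋂ f : ↥F', actSet a (f : G) (P (σ f))
      with hPbardef
    have hPbar_m : ∀ σ, MeasurableSet (Pbar σ) := refine_measurable ha hP F'
    have hPbar_d : Pairwise (Function.onFun Disjoint Pbar) := refine_pairwise_disjoint ha hP F'
    have hsum' : (∑ σ : ↥F' → Fin k, |(ν (φ σ)).toReal - (μ (Pbar σ)).toReal|) < δ := hsum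
    set S : Fin k → Set Y := fun i => ⋃ σ, ⋃ (_ : σ ⟨1, h1⟩ = i), φ σ with hSdef
    set R : Set Y := (⋃ σ, φ σ)ᶜ with hRdef
    set i0 : Fin k := ⟨0, hk⟩ with hi0def
    set Q : Fin k → Set Y := fun i => if i = i0 then S i ∪ R else S i with hQdef
    have hSm : ∀ i, MeasurableSet (S i) :=
      fun i => MeasurableSet.iUnion fun σ => MeasurableSet.iUnion fun _ => hφm σ
    have hRm : MeasurableSet R := (MeasurableSet.iUnion fun σ => hφm σ).compl
    have hQm : ∀ i, MeasurableSet (Q i) := by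
      intro i
      rw [hQdef]
      dsimp only
      split_ifs
      · exact (hSm i).union hRm
      · exact hSm i
    have hSd : Pairwise (Function.onFun Disjoint S) := by
      intro i j hij
      rw [Function.onFun, Set.disjoint_left]
      rintro x hx hx'
      simp only [hSdef, Set.mem_iUnion] at hx hx'
      obtain ⟨σ, hσ, hxσ⟩ := hx
      obtain ⟨τ, hτ, hxτ⟩ := hx'
      rcases eq_or_ne σ τ with rfl | hst
      · exact hij (hσ ▸ hτ ▸ rfl)
      · exact Set.disjoint_left.1 (hφd hst) hxσ hxτ
    have hSR : ∀ i, Disjoint (S i) R := by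
      intro i
      refine Disjoint.mono_left ?_ disjoint_compl_right
      rw [hSdef]
      exact Set.iUnion_subset fun σ => Set.iUnion_subset fun _ => Set.subset_iUnion _ σ
    have hQd : Pairwise (Function.onFun Disjoint Q) := by
      intro i j hij
      rw [Function.onFun, hQdef]
      dsimp only
      split_ifs with hi hj hj
      · exact absurd (hi.trans hj.symm) hij
      · exact Disjoint.union_left (hSd hij) (Disjoint.symm (hSR j))
      · exact Disjoint.union_right (hSd hij) (hSR i)
      · exact hSd hij
    have hQcover : (⋃ i, Q i) = Set.univ := by
      apply Set.eq_univ_of_forall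
      intro x
      by_cases hx : x ∈ ⋃ σ, φ σ
      · obtain ⟨σ, hxσ⟩ := Set.mem_iUnion.1 hx
        have hxS : x ∈ S (σ ⟨1, h1⟩) := by
          rw [hSdef]
          exact Set.mem_iUnion.2 ⟨σ, Set.mem_iUnion.2 ⟨rfl, hxσ⟩⟩
        refine Set.mem_iUnion.2 ⟨σ ⟨1, h1⟩, ?_⟩
        rw [hQdef]
        dsimp only
        split_ifs
        · exact Set.mem_union_left _ hxS
        · exact hxS
      · refine Set.mem_iUnion.2 ⟨i0, ?_⟩
        rw [hQdef]
        dsimp only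
        rw [if_pos rfl]
        exact Set.mem_union_right _ hx
    refine ⟨Q, ⟨hQm, hQd, hQcover⟩, ?_⟩
    -- it remains to bound statDist
    have hQSsub : ∀ i, Q i ∆ S i ⊆ R := by
      intro i
      rw [hQdef]
      dsimp only
      split_ifs
      · intro x hx
        simp only [Set.mem_symmDiff, Set.mem_union] at hx
        rcases hx with ⟨h1x, h2x⟩ | ⟨h1x, h2x⟩
        · tauto
        · exact absurd (Or.inl h1x) h2x
      · rw [symmDiff_self]; exact Set.empty_subset _
    have hRsmall : (ν R).toReal ≤ δ := by
      have hcompl : (ν (⋃ σ, φ σ)).toReal + (ν R).toReal = 1 := by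
        have h0 : ν (⋃ σ, φ σ) + ν R = 1 := by
          rw [hRdef]
          exact (measure_add_measure_compl (MeasurableSet.iUnion fun σ => hφm σ)).trans
            measure_univ
        have h1' := congrArg ENNReal.toReal h0
        rw [ENNReal.toReal_add (measure_ne_top _ _) (measure_ne_top _ _)] at h1'
        simpa using h1'
      have hφall : (ν (⋃ σ, φ σ)).toReal = ∑ σ : ↥F' → Fin k, (ν (φ σ)).toReal := by
        have hset : (⋃ σ, φ σ) = ⋃ σ, ⋃ (_ : (fun _ : ↥F' → Fin k => True) σ), φ σ := by
          simp
        rw [hset, toReal_measure_iUnion_cond ν hφd hφm _]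
        rw [Finset.filter_true]
      have hPall : (∑ σ : ↥F' → Fin k, (μ (Pbar σ)).toReal) = 1 := by
        have hset : (⋃ σ, Pbar σ) = ⋃ σ, ⋃ (_ : (fun _ : ↥F' → Fin k => True) σ), Pbar σ := by
          simp
        have := toReal_measure_iUnion_cond μ hPbar_d hPbar_m
          (fun _ : ↥F' → Fin k => True)
        rw [← hset, refine_cover ha hP F' ⟨1, h1⟩] at this
        rw [← Finset.filter_true (Finset.univ : Finset (↥F' → Fin k)), ← this]
        simp
      have habs : |(∑ σ : ↥F' → Fin k, (ν (φ σ)).toReal) - ∑ σ : ↥F' → Fin k,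
          (μ (Pbar σ)).toReal| ≤ ∑ σ : ↥F' → Fin k, |(ν (φ σ)).toReal - (μ (Pbar σ)).toReal| := by
        rw [← Finset.sum_sub_distrib]
        exact Finset.abs_sum_le_sum_abs _ _
      rw [hPall] at habs
      have := abs_le.1 (le_trans habs (le_of_lt hsum'))
      linarith [hcompl, hφall, this.1]
    -- the per-entry estimate
    have main : ∀ (f' : ↥F') (i j : Fin k),
        |(μ (P i ∩ actSet a (f' : G) (P j))).toReal -
            (ν (Q i ∩ actSet b (f' : G) (Q j))).toReal|
          ≤ (∑ σ ∈ Finset.univ.filter (fun σ : ↥F' → Fin k => σ ⟨1, h1⟩ = i ∧ σ f' = j),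
              |(ν (φ σ)).toReal - (μ (Pbar σ)).toReal|) + 3 * δ := by
      intro f' i j
      set V : Set Y := ⋃ σ, ⋃ (_ : σ f' = j), φ σ with hVdef
      have hVm : MeasurableSet V :=
        MeasurableSet.iUnion fun σ => MeasurableSet.iUnion fun _ => hφm σ
      -- the μ-side identity
      have hμid : (μ (P i ∩ actSet a (f' : G) (P j))).toReal
          = ∑ σ ∈ Finset.univ.filter (fun σ : ↥F' → Fin k => σ ⟨1, h1⟩ = i ∧ σ f' = j),
              (μ (Pbar σ)).toReal := by
        have hPi : P i = actSet a ((⟨1, h1⟩ : ↥F') : G) (P i) := (ha.actSet_one (P i)).symm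
        rw [hPi, ← refine_biUnion ha hP F' ⟨1, h1⟩ i, ← refine_biUnion ha hP F' f' j,
          iUnion_cond_inter (S := fun σ : ↥F' → Fin k =>
            ⋂ f : ↥F', actSet a (f : G) (P (σ f))) hPbar_d]
        exact toReal_measure_iUnion_cond μ hPbar_d hPbar_m _
      -- ν (S i ∩ V) equals the φ-sum
      have hνid : (ν (S i ∩ V)).toReal
          = ∑ σ ∈ Finset.univ.filter (fun σ : ↥F' → Fin k => σ ⟨1, h1⟩ = i ∧ σ f' = j),
              (ν (φ σ)).toReal := by
        simp only [hSdef, hVdef]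
        rw [iUnion_cond_inter hφd]
        exact toReal_measure_iUnion_cond ν hφd hφm _
      -- step 1 : |μ-term - Σν φ| ≤ E
      have step1 : |(μ (P i ∩ actSet a (f' : G) (P j))).toReal - (ν (S i ∩ V)).toReal|
          ≤ ∑ σ ∈ Finset.univ.filter (fun σ : ↥F' → Fin k => σ ⟨1, h1⟩ = i ∧ σ f' = j),
              |(ν (φ σ)).toReal - (μ (Pbar σ)).toReal| := by
        rw [hμid, hνid, abs_sub_comm, ← Finset.sum_sub_distrib]
        exact Finset.abs_sum_le_sum_abs _ _
      -- step 2 : |ν (S i ∩ V) - ν (S i ∩ f·S j)| ≤ δ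
      have hfSm : MeasurableSet (actSet b (f' : G) (S j)) := hb.measurableSet_actSet _ (hSm j)
      have hequiv' : (ν ((actSet b (f' : G) (S j)) ∆ V)).toReal < δ := hequiv f' j
      have step2 : |(ν (S i ∩ V)).toReal - (ν (S i ∩ actSet b (f' : G) (S j))).toReal| ≤ δ := by
        refine le_trans (abs_measureReal_sub_le_measureReal_symmDiff
          ((hSm i).inter hVm).nullMeasurableSet ((hSm i).inter hfSm).nullMeasurableSet) ?_
        refine le_trans ?_ (le_of_lt hequiv')
        refine ENNReal.toReal_mono (measure_ne_top _ _) (measure_mono ?_)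
        refine le_trans (symmDiff_inter_subset _ _ _ _) ?_
        rw [symmDiff_self, symmDiff_comm V]
        simp
      -- step 3 : |ν (S i ∩ f·S j) - ν (Q i ∩ f·Q j)| ≤ 2δ
      have hQSj : actSet b (f' : G) (Q j) ∆ actSet b (f' : G) (S j)
          ⊆ actSet b (f' : G) R := by
        rw [← hb.actSet_symmDiff]
        exact Set.image_mono (hQSsub j)
      have step3 : |(ν (Q i ∩ actSet b (f' : G) (Q j))).toReal -
          (ν (S i ∩ actSet b (f' : G) (S j))).toReal| ≤ 2 * δ := by
        have hsub : (Q i ∩ actSet b (f' : G) (Q j)) ∆ (S i ∩ actSet b (f' : G) (S j))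
            ⊆ R ∪ actSet b (f' : G) R :=
          le_trans (symmDiff_inter_subset _ _ _ _)
            (Set.union_subset_union (hQSsub i) hQSj)
        refine le_trans (abs_measureReal_sub_le_measureReal_symmDiff
          ((hQm i).inter (hb.measurableSet_actSet _ (hQm j))).nullMeasurableSet
          ((hSm i).inter hfSm).nullMeasurableSet) ?_
        have hb1 : ν ((Q i ∩ actSet b (f' : G) (Q j)) ∆ (S i ∩ actSet b (f' : G) (S j)))
            ≤ ν R + ν (actSet b (f' : G) R) :=
          le_trans (measure_mono hsub) (measure_union_le _ _)
        have hb2 := ENNReal.toReal_mono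
          (by exact ENNReal.add_ne_top.2 ⟨measure_ne_top _ _, measure_ne_top _ _⟩) hb1
        rw [ENNReal.toReal_add (measure_ne_top _ _) (measure_ne_top _ _)] at hb2
        have hb3 : (ν (actSet b (f' : G) R)).toReal = (ν R).toReal :=
          congrArg ENNReal.toReal (hb.measure_actSet _ hRm)
        simp only [Measure.real]
        linarith
      -- combine
      calc |(μ (P i ∩ actSet a (f' : G) (P j))).toReal -
              (ν (Q i ∩ actSet b (f' : G) (Q j))).toReal|
          ≤ |(μ (P i ∩ actSet a (f' : G) (P j))).toReal - (ν (S i ∩ V)).toReal|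
            + |(ν (S i ∩ V)).toReal - (ν (S i ∩ actSet b (f' : G) (S j))).toReal|
            + |(ν (S i ∩ actSet b (f' : G) (S j))).toReal -
                (ν (Q i ∩ actSet b (f' : G) (Q j))).toReal| := by
            have := abs_sub_le ((μ (P i ∩ actSet a (f' : G) (P j))).toReal)
              ((ν (S i ∩ V)).toReal) ((ν (Q i ∩ actSet b (f' : G) (Q j))).toReal)
            have h2 := abs_sub_le ((ν (S i ∩ V)).toReal)
              ((ν (S i ∩ actSet b (f' : G) (S j))).toReal)
              ((ν (Q i ∩ actSet b (f' : G) (Q j))).toReal)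
            linarith
        _ ≤ (∑ σ ∈ Finset.univ.filter (fun σ : ↥F' → Fin k => σ ⟨1, h1⟩ = i ∧ σ f' = j),
              |(ν (φ σ)).toReal - (μ (Pbar σ)).toReal|) + δ + 2 * δ := by
            have h3 : |(ν (S i ∩ actSet b (f' : G) (S j))).toReal -
                (ν (Q i ∩ actSet b (f' : G) (Q j))).toReal| ≤ 2 * δ := by
              rw [abs_sub_comm]; exact step3
            gcongr
        _ ≤ _ := by linarith
    -- fiberwise sum of the error terms
    have fiber : ∀ f' : ↥F', (∑ i : Fin k, ∑ j : Fin k,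
        ∑ σ ∈ Finset.univ.filter (fun σ : ↥F' → Fin k => σ ⟨1, h1⟩ = i ∧ σ f' = j),
          |(ν (φ σ)).toReal - (μ (Pbar σ)).toReal|) ≤ δ := by
      intro f'
      have hre : (∑ i : Fin k, ∑ j : Fin k,
          ∑ σ ∈ Finset.univ.filter (fun σ : ↥F' → Fin k => σ ⟨1, h1⟩ = i ∧ σ f' = j),
            |(ν (φ σ)).toReal - (μ (Pbar σ)).toReal|)
          = ∑ pr : Fin k × Fin k,
              ∑ σ ∈ Finset.univ.filter
                (fun σ : ↥F' → Fin k => (σ ⟨1, h1⟩, σ f') = pr),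
                |(ν (φ σ)).toReal - (μ (Pbar σ)).toReal| := by
        rw [Fintype.sum_prod_type]
        refine Finset.sum_congr rfl fun i _ => Finset.sum_congr rfl fun j _ => ?_
        refine Finset.sum_congr ?_ fun _ _ => rfl
        ext σ
        simp [Prod.ext_iff]
      rw [hre, Finset.sum_fiberwise]
      exact le_of_lt hsum'
    -- final assembly
    have hswap : statDist μ a ν b F P Q = ∑ f ∈ F, ∑ i : Fin k, ∑ j : Fin k,
        |(μ (P i ∩ actSet a f (P j))).toReal - (ν (Q i ∩ actSet b f (Q j))).toReal| := by
      unfold statDist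
      rw [Finset.sum_congr rfl (fun i _ => Finset.sum_comm), Finset.sum_comm]
    rw [hswap]
    have hperf : ∀ f ∈ F, (∑ i : Fin k, ∑ j : Fin k,
        |(μ (P i ∩ actSet a f (P j))).toReal - (ν (Q i ∩ actSet b f (Q j))).toReal|)
        ≤ δ + (k : ℝ) * ((k : ℝ) * (3 * δ)) := by
      intro f hf
      set f' : ↥F' := ⟨f, Finset.mem_insert_of_mem hf⟩ with hf'def
      have hbnd : (∑ i : Fin k, ∑ j : Fin k,
          |(μ (P i ∩ actSet a f (P j))).toReal - (ν (Q i ∩ actSet b f (Q j))).toReal|)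
          ≤ ∑ i : Fin k, ∑ j : Fin k,
            ((∑ σ ∈ Finset.univ.filter (fun σ : ↥F' → Fin k => σ ⟨1, h1⟩ = i ∧ σ f' = j),
              |(ν (φ σ)).toReal - (μ (Pbar σ)).toReal|) + 3 * δ) :=
        Finset.sum_le_sum fun i _ => Finset.sum_le_sum fun j _ => main f' i j
      refine le_trans hbnd ?_
      have hsplit : (∑ i : Fin k, ∑ j : Fin k,
          ((∑ σ ∈ Finset.univ.filter (fun σ : ↥F' → Fin k => σ ⟨1, h1⟩ = i ∧ σ f' = j),
            |(ν (φ σ)).toReal - (μ (Pbar σ)).toReal|) + 3 * δ))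
          = (∑ i : Fin k, ∑ j : Fin k,
            ∑ σ ∈ Finset.univ.filter (fun σ : ↥F' → Fin k => σ ⟨1, h1⟩ = i ∧ σ f' = j),
              |(ν (φ σ)).toReal - (μ (Pbar σ)).toReal|)
            + (k : ℝ) * ((k : ℝ) * (3 * δ)) := by
        rw [Finset.sum_congr rfl (fun i _ => Finset.sum_add_distrib), Finset.sum_add_distrib]
        simp only [Finset.sum_const, Finset.card_univ, Fintype.card_fin, nsmul_eq_mul]
      rw [hsplit]
      have := fiber f'
      linarith
    refine le_trans (Finset.sum_le_sum hperf) ?_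
    rw [Finset.sum_const, nsmul_eq_mul]
    have hK : (0 : ℝ) ≤ (k : ℝ) := Nat.cast_nonneg _
    have hc : (0 : ℝ) ≤ (F.card : ℝ) := Nat.cast_nonneg _
    have hden : (0 : ℝ) < 4 * ((k : ℝ) ^ 2 + 1) * ((F.card : ℝ) + 1) := by
      have hA : (0 : ℝ) < (k : ℝ) ^ 2 + 1 := by nlinarith [sq_nonneg (k : ℝ)]
      have hB : (0 : ℝ) < (F.card : ℝ) + 1 := by linarith
      nlinarith
    have hεδ : δ * (4 * ((k : ℝ) ^ 2 + 1) * ((F.card : ℝ) + 1)) = ε := by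
      rw [hδdef, div_mul_cancel₀ _ (ne_of_gt hden)]
    nlinarith [mul_nonneg (mul_nonneg hδ.le (mul_nonneg hK hK)) hc,
      mul_nonneg hδ.le (mul_nonneg hK hK), mul_nonneg hδ.le hc, hδ.le]
end

section
/- Let G be a countable group and let (H_n) be a chain of finite-index subgroups of G with [H_n : H_{n+1}] ≥ 2 for every n, and let a = a^{(H_n)} be the associated profinite action on (X, μ). Then for every ε > 0 there exists a countable measurable partition α of X which is generating (the smallest G-invariant σ-algebra containing α equals the Borel σ-algebra of X up to μ-null sets) and whose Shannon entropy satisfies H(α) := Σ_{A ∈ α} −μ(A) log μ(A) ≤ ε. -/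
open MeasureTheory Filter Topology
open scoped ENNReal symmDiff

/-! The profinite action associated to a chain of finite-index subgroups. -/

/-- Each coset space `G ⧸ K` of the countable group `G` is a finite (or countable)
discrete space; we equip it with the σ-algebra of all subsets. -/
instance quotientCosetMeasurableSpace {G : Type*} [Group G] (K : Subgroup G) :
    MeasurableSpace (G ⧸ K) := ⊤

/-- The canonical projection `G ⧸ H → G ⧸ K` for nested subgroups `H ≤ K`. -/
def cosetMap {G : Type*} [Group G] {H K : Subgroup G} (h : H ≤ K) : G ⧸ H → G ⧸ K :=
  Quotient.map' id fun a b hab => by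
    rw [QuotientGroup.leftRel_apply] at hab ⊢
    exact h hab

lemma cosetMap_smul {G : Type*} [Group G] {H K : Subgroup G} (h : H ≤ K) (g : G)
    (q : G ⧸ H) : cosetMap h (g • q) = g • cosetMap h q := by
  induction q using QuotientGroup.induction_on with
  | _ a => rfl

/-- The inverse limit of the coset spaces `G ⧸ H n` along a decreasing chain of
subgroups: the space of the profinite action `a^{(H_n)}`, as a closed subset of the
product `∀ n, G ⧸ H n` (with the Borel = product σ-algebra of the finite discrete
spaces `G ⧸ H n`). -/
def profSpace {G : Type*} [Group G] (H : ℕ → Subgroup G) (hdec : ∀ n, H (n + 1) ≤ H n) :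
    Type _ :=
  {x : ∀ n, G ⧸ H n // ∀ n, cosetMap (hdec n) (x (n + 1)) = x n}

instance profSpaceMeasurableSpace {G : Type*} [Group G] (H : ℕ → Subgroup G)
    (hdec : ∀ n, H (n + 1) ≤ H n) : MeasurableSpace (profSpace H hdec) :=
  inferInstanceAs (MeasurableSpace
    {x : ∀ n, G ⧸ H n // ∀ n, cosetMap (hdec n) (x (n + 1)) = x n})

/-- The profinite action of `G` on the inverse limit of the `G ⧸ H n`, by left
multiplication in every coordinate. -/
def profAct {G : Type*} [Group G] (H : ℕ → Subgroup G) (hdec : ∀ n, H (n + 1) ≤ H n)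
    (g : G) (x : profSpace H hdec) : profSpace H hdec :=
  ⟨fun n => g • x.1 n, fun n => by rw [cosetMap_smul, x.2 n]⟩

/-- The uniform probability measure on the (finite) coset space `G ⧸ K`. -/
noncomputable def unifQuot {G : Type*} [Group G] (K : Subgroup G) : Measure (G ⧸ K) :=
  (K.index : ℝ≥0∞)⁻¹ • Measure.count

/-! ### Auxiliary material -/

instance quotientCosetMeasurableSingleton {G : Type*} [Group G] (K : Subgroup G) :
    MeasurableSingletonClass (G ⧸ K) := ⟨fun _ => trivial⟩

section Aux

variable {G : Type*} [Group G] {H : ℕ → Subgroup G}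

/-- Compatibility along the chain: if a point of the inverse limit lies in the coset of
`g` at level `n`, it lies in the coset of `g` at every lower level. -/
lemma profSpace_compat (hdec : ∀ n, H (n + 1) ≤ H n) (x : profSpace H hdec) (g : G)
    {m n : ℕ} (h : m ≤ n) : x.1 n = (g : G ⧸ H n) → x.1 m = (g : G ⧸ H m) := by
  induction n, h using Nat.le_induction with
  | base => exact id
  | succ n hmn ih =>
    intro hx
    apply ih
    have h2 := x.2 n
    rw [hx] at h2
    exact h2.symm

/-- The coset cylinder set at level `n` for the group element `g`. -/
def cosetCyl (hdec : ∀ n, H (n + 1) ≤ H n) (g : G) (n : ℕ) : Set (profSpace H hdec) :=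
  {x | x.1 n = (g : G ⧸ H n)}

lemma cosetCyl_anti (hdec : ∀ n, H (n + 1) ≤ H n) (g : G) {m n : ℕ} (h : m ≤ n) :
    cosetCyl hdec g n ⊆ cosetCyl hdec g m :=
  fun x hx => profSpace_compat hdec x g h hx

lemma measurable_eval (hdec : ∀ n, H (n + 1) ≤ H n) (n : ℕ) :
    Measurable (fun x : profSpace H hdec => x.1 n) :=
  (measurable_pi_apply n).comp measurable_subtype_coe

lemma measurable_cosetCyl (hdec : ∀ n, H (n + 1) ≤ H n) (g : G) (n : ℕ) :
    MeasurableSet (cosetCyl hdec g n) :=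
  measurable_eval hdec n (show MeasurableSet {(g : G ⧸ H n)} from trivial)

lemma mu_cosetCyl (hdec : ∀ n, H (n + 1) ≤ H n) (μ : Measure (profSpace H hdec))
    (hμ : ∀ n, μ.map (fun x => x.1 n) = unifQuot (H n)) (g : G) (n : ℕ) :
    μ (cosetCyl hdec g n) = ((H n).index : ℝ≥0∞)⁻¹ := by
  have h2 : μ.map (fun x => x.1 n) {(g : G ⧸ H n)}
      = μ ((fun x : profSpace H hdec => x.1 n) ⁻¹' {(g : G ⧸ H n)}) :=
    Measure.map_apply (measurable_eval hdec n) trivial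
  rw [hμ n] at h2
  have h3 : (fun x : profSpace H hdec => x.1 n) ⁻¹' {(g : G ⧸ H n)} = cosetCyl hdec g n := rfl
  rw [h3] at h2
  rw [← h2, unifQuot, Measure.smul_apply, Measure.count_singleton, smul_eq_mul, mul_one]

lemma two_pow_le_index (hdec : ∀ n, H (n + 1) ≤ H n) (hfi : ∀ n, (H n).FiniteIndex)
    (hidx : ∀ n, 2 ≤ (H (n + 1)).relIndex (H n)) : ∀ n, 2 ^ n ≤ (H n).index := by
  intro n
  induction n with
  | zero => simpa using Nat.one_le_iff_ne_zero.2 (hfi 0).index_ne_zero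
  | succ n ih =>
    calc 2 ^ (n + 1) = 2 * 2 ^ n := by ring
    _ ≤ (H (n + 1)).relIndex (H n) * (H n).index := Nat.mul_le_mul (hidx n) ih
    _ = (H (n + 1)).index := Subgroup.relIndex_mul_index (hdec n)

lemma mu_cosetCyl_le (hdec : ∀ n, H (n + 1) ≤ H n) (hfi : ∀ n, (H n).FiniteIndex)
    (hidx : ∀ n, 2 ≤ (H (n + 1)).relIndex (H n)) (μ : Measure (profSpace H hdec))
    (hμ : ∀ n, μ.map (fun x => x.1 n) = unifQuot (H n)) (g : G) (n : ℕ) :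
    μ (cosetCyl hdec g n) ≤ ((2 : ℝ≥0∞) ^ n)⁻¹ := by
  rw [mu_cosetCyl hdec μ hμ g n]
  refine ENNReal.inv_le_inv.mpr ?_
  have h := two_pow_le_index hdec hfi hidx n
  exact_mod_cast h

lemma mu_iInter_cosetCyl (hdec : ∀ n, H (n + 1) ≤ H n) (hfi : ∀ n, (H n).FiniteIndex)
    (hidx : ∀ n, 2 ≤ (H (n + 1)).relIndex (H n)) (μ : Measure (profSpace H hdec))
    (hμ : ∀ n, μ.map (fun x => x.1 n) = unifQuot (H n)) (g : G) :
    μ (⋂ m, cosetCyl hdec g m) = 0 := by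
  refine le_antisymm ?_ (zero_le)
  have h1 : ∀ n, μ (⋂ m, cosetCyl hdec g m) ≤ ((2 : ℝ≥0∞) ^ n)⁻¹ := fun n =>
    (measure_mono (Set.iInter_subset _ n)).trans (mu_cosetCyl_le hdec hfi hidx μ hμ g n)
  have h2 : Tendsto (fun n : ℕ => ((2 : ℝ≥0∞) ^ n)⁻¹) atTop (nhds 0) := by
    have h3 := ENNReal.tendsto_pow_atTop_nhds_zero_of_lt_one
      (r := (2 : ℝ≥0∞)⁻¹) (ENNReal.inv_lt_one.2 ENNReal.one_lt_two)
    simpa [ENNReal.inv_pow] using h3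
  exact ge_of_tendsto' h2 h1

lemma profAct_one (hdec : ∀ n, H (n + 1) ≤ H n) (x : profSpace H hdec) :
    profAct H hdec 1 x = x :=
  Subtype.ext (funext fun n => one_smul G (x.1 n))

lemma profAct_mul (hdec : ∀ n, H (n + 1) ≤ H n) (g h : G) (x : profSpace H hdec) :
    profAct H hdec g (profAct H hdec h x) = profAct H hdec (g * h) x :=
  Subtype.ext (funext fun n => (mul_smul g h (x.1 n)).symm)

lemma profAct_image (hdec : ∀ n, H (n + 1) ≤ H n) (g : G) (S : Set (profSpace H hdec)) :
    profAct H hdec g '' S = profAct H hdec g⁻¹ ⁻¹' S := by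
  ext x
  constructor
  · rintro ⟨y, hy, rfl⟩
    show profAct H hdec g⁻¹ (profAct H hdec g y) ∈ S
    rw [profAct_mul, inv_mul_cancel, profAct_one]
    exact hy
  · intro hx
    exact ⟨profAct H hdec g⁻¹ x, hx, by rw [profAct_mul, mul_inv_cancel, profAct_one]⟩

lemma profAct_image_cosetCyl (hdec : ∀ n, H (n + 1) ≤ H n) (g h : G) (m : ℕ) :
    profAct H hdec g '' cosetCyl hdec h m = cosetCyl hdec (g * h) m := by
  rw [profAct_image]
  ext x
  show (g⁻¹ • x.1 m) = (h : G ⧸ H m) ↔ x.1 m = ((g * h : G) : G ⧸ H m)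
  rw [inv_smul_eq_iff]
  exact Iff.rfl

lemma profAct_image_diff (hdec : ∀ n, H (n + 1) ≤ H n) (g : G) (a b : ℕ) :
    profAct H hdec g '' (cosetCyl hdec 1 a \ cosetCyl hdec 1 b)
      = cosetCyl hdec g a \ cosetCyl hdec g b := by
  rw [profAct_image, Set.preimage_diff, ← profAct_image, ← profAct_image,
    profAct_image_cosetCyl, profAct_image_cosetCyl, mul_one]

end Aux

lemma approx_iUnion {X : Type*} {mX : MeasurableSpace X} (μ : Measure X)
    {F : MeasurableSpace X} {ι : Sort*} [Countable ι] {f B : ι → Set X}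
    (hB : ∀ i, MeasurableSet[F] (B i)) (h0 : ∀ i, μ (f i ∆ B i) = 0) :
    MeasurableSet[F] (⋃ i, B i) ∧ μ ((⋃ i, f i) ∆ (⋃ i, B i)) = 0 := by
  refine ⟨MeasurableSet.iUnion hB, measure_mono_null ?_ (measure_iUnion_null h0)⟩
  intro x hx
  rcases Set.mem_symmDiff.1 hx with ⟨hx1, hx2⟩ | ⟨hx1, hx2⟩
  · obtain ⟨i, hi⟩ := Set.mem_iUnion.1 hx1
    exact Set.mem_iUnion.2
      ⟨i, Set.mem_symmDiff.2 (Or.inl ⟨hi, fun h => hx2 (Set.mem_iUnion.2 ⟨i, h⟩)⟩)⟩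
  · obtain ⟨i, hi⟩ := Set.mem_iUnion.1 hx1
    exact Set.mem_iUnion.2
      ⟨i, Set.mem_symmDiff.2 (Or.inr ⟨hi, fun h => hx2 (Set.mem_iUnion.2 ⟨i, h⟩)⟩)⟩

lemma sqrt_pow_aux (x : ℝ) (hx : 0 ≤ x) (n : ℕ) : Real.sqrt (x ^ n) = Real.sqrt x ^ n := by
  induction n with
  | zero => simp
  | succ n ih => rw [pow_succ, pow_succ, Real.sqrt_mul (pow_nonneg hx n), ih]

lemma negMulLog_le_one_sub {t : ℝ} (ht : 0 ≤ t) : Real.negMulLog t ≤ 1 - t := by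
  rcases eq_or_lt_of_le ht with h | h
  · simp [← h, Real.negMulLog]
  · have h2 := Real.log_le_sub_one_of_pos (inv_pos.2 h)
    have h3 : Real.log t⁻¹ = -Real.log t := Real.log_inv t
    have h4 : t * t⁻¹ = 1 := mul_inv_cancel₀ h.ne'
    have : Real.negMulLog t = t * Real.log t⁻¹ := by
      simp [Real.negMulLog, h3]
    rw [this]
    nlinarith [h2, h.le]

lemma negMulLog_le_two_sqrt {t : ℝ} (ht : 0 ≤ t) :
    Real.negMulLog t ≤ 2 * Real.sqrt t := by
  rcases eq_or_lt_of_le ht with h | h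
  · simp [← h, Real.negMulLog]
  · have h1 : Real.log t⁻¹ = 2 * Real.log (Real.sqrt t⁻¹) := by
      rw [Real.log_sqrt (inv_nonneg.2 ht)]; ring
    have h2 : Real.log (Real.sqrt t⁻¹) ≤ Real.sqrt t⁻¹ := by
      have := Real.log_le_sub_one_of_pos (Real.sqrt_pos.2 (inv_pos.2 h))
      linarith
    have h3 : t * Real.sqrt t⁻¹ = Real.sqrt t := by
      rw [Real.sqrt_inv, ← div_eq_mul_inv, Real.div_sqrt]
    have h5 : Real.negMulLog t = t * Real.log t⁻¹ := by
      simp [Real.negMulLog, Real.log_inv]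
    calc Real.negMulLog t = 2 * (t * Real.log (Real.sqrt t⁻¹)) := by rw [h5, h1]; ring
    _ ≤ 2 * (t * Real.sqrt t⁻¹) := by nlinarith [h.le, h2]
    _ = 2 * Real.sqrt t := by rw [h3]

/-- Lemma 3.13. If `(H n)` is a chain of finite-index subgroups of a
countable group `G` with `[H n : H (n+1)] ≥ 2` for all `n`, then for every `ε > 0` the
profinite action `a^{(H_n)}` admits a countable generating measurable partition (its
`G`-translates generate the full σ-algebra modulo null sets) of Shannon entropy at
most `ε`. -/
theorem profinite_generating_partition_small_entropy {G : Type*} [Group G] [Countable G]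
    (H : ℕ → Subgroup G) (hdec : ∀ n, H (n + 1) ≤ H n) (hfi : ∀ n, (H n).FiniteIndex)
    (hidx : ∀ n, 2 ≤ (H (n + 1)).relIndex (H n))
    (μ : Measure (profSpace H hdec)) [IsProbabilityMeasure μ]
    (hμ : ∀ n, μ.map (fun x => x.1 n) = unifQuot (H n))
    (ε : ℝ) (hε : 0 < ε) :
    ∃ P : ℕ → Set (profSpace H hdec),
      (∀ i, MeasurableSet (P i)) ∧
      Pairwise (Function.onFun Disjoint P) ∧
      (⋃ i, P i) = Set.univ ∧
      (∀ A : Set (profSpace H hdec), MeasurableSet A →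
        ∃ B : Set (profSpace H hdec),
          MeasurableSet[MeasurableSpace.generateFrom
            {S : Set (profSpace H hdec) | ∃ (g : G) (i : ℕ),
              S = profAct H hdec g '' P i}] B ∧
          μ (A ∆ B) = 0) ∧
      Summable (fun i => Real.negMulLog ((μ (P i)).toReal)) ∧
      ∑' i, Real.negMulLog ((μ (P i)).toReal) ≤ ε := by
  classical
  set s : ℝ := Real.sqrt (1 / 2) with hs_def
  have hs0 : 0 < s := Real.sqrt_pos.2 (by norm_num)
  have hs1 : s < 1 := by
    rw [hs_def, show (1 : ℝ) = Real.sqrt 1 by simp]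
    exact Real.sqrt_lt_sqrt (by norm_num) (by norm_num)
  have hhalf : (1 / 2 : ℝ) ≤ s := by
    rw [hs_def, Real.le_sqrt (by norm_num) (by norm_num)]
    norm_num
  have hs2 : (2 : ℝ) ≤ 3 * s := by
    have : (2 / 3 : ℝ) ≤ s := by
      rw [hs_def, Real.le_sqrt (by norm_num) (by norm_num)]
      norm_num
    linarith
  -- choose N
  have htend : Tendsto (fun n : ℕ => 3 * s ^ n * (1 - s)⁻¹) atTop (nhds 0) := by
    have h1 := ((tendsto_pow_atTop_nhds_zero_of_lt_one hs0.le hs1).const_mul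
      (3 : ℝ)).mul_const (1 - s)⁻¹
    simpa using h1
  obtain ⟨N, hN⟩ := (htend.eventually (gt_mem_nhds hε)).exists
  -- the partition
  set P : ℕ → Set (profSpace H hdec) := fun i =>
    Nat.casesOn i ((cosetCyl hdec 1 N)ᶜ ∪ ⋂ m, cosetCyl hdec 1 m)
      (fun k => cosetCyl hdec 1 (N + k) \ cosetCyl hdec 1 (N + k + 1)) with hPdef
  have hP0 : P 0 = (cosetCyl hdec 1 N)ᶜ ∪ ⋂ m, cosetCyl hdec 1 m := rfl
  have hPk : ∀ k, P (k + 1) = cosetCyl hdec 1 (N + k) \ cosetCyl hdec 1 (N + k + 1) :=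
    fun k => rfl
  -- entropy estimates
  have htr : ∀ (m : ℕ) (S : Set (profSpace H hdec)), μ S ≤ ((2 : ℝ≥0∞) ^ m)⁻¹ →
      (μ S).toReal ≤ (1 / 2 : ℝ) ^ m := by
    intro m S h
    have hne : ((2 : ℝ≥0∞) ^ m)⁻¹ ≠ ⊤ :=
      ENNReal.inv_ne_top.2 (pow_ne_zero m (by norm_num))
    have h2 := ENNReal.toReal_mono hne h
    have h3 : (((2 : ℝ≥0∞) ^ m)⁻¹).toReal = (1 / 2 : ℝ) ^ m := by
      rw [ENNReal.toReal_inv, ENNReal.toReal_pow, ENNReal.toReal_ofNat, one_div, inv_pow]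
    rwa [h3] at h2
  have hprob : ∀ S : Set (profSpace H hdec), (μ S).toReal ≤ 1 := by
    intro S
    have h := prob_le_one (μ := μ) (s := S)
    have h2 := ENNReal.toReal_mono ENNReal.one_ne_top h
    simpa using h2
  have hbound : ∀ i, Real.negMulLog ((μ (P i)).toReal) ≤ 3 * s ^ (N + i) := by
    intro i
    cases i with
    | zero =>
      have h1 := negMulLog_le_one_sub (ENNReal.toReal_nonneg (a := μ (P 0)))
      have h3 : (1 : ℝ≥0∞) ≤ μ (P 0) + μ (cosetCyl hdec 1 N) := by
        rw [← measure_univ (μ := μ)]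
        refine (measure_mono ?_).trans (measure_union_le _ _)
        intro x _
        by_cases hx : x ∈ cosetCyl hdec 1 N
        · exact Set.mem_union_right _ hx
        · refine Set.mem_union_left _ ?_
          rw [hP0]
          exact Set.mem_union_left _ hx
      have h2 : (1 : ℝ) ≤ (μ (P 0)).toReal + (μ (cosetCyl hdec 1 N)).toReal := by
        have h4 := ENNReal.toReal_mono (a := 1)
          (ENNReal.add_ne_top.2 ⟨measure_ne_top μ _, measure_ne_top μ _⟩) h3
        rwa [ENNReal.toReal_one,
          ENNReal.toReal_add (measure_ne_top μ _) (measure_ne_top μ _)] at h4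
      have h4 : (μ (cosetCyl hdec 1 N)).toReal ≤ (1 / 2 : ℝ) ^ N :=
        htr N _ (mu_cosetCyl_le hdec hfi hidx μ hμ 1 N)
      have h5 : (1 / 2 : ℝ) ^ N ≤ s ^ N := pow_le_pow_left₀ (by norm_num) hhalf N
      have h6 : 0 ≤ s ^ N := (pow_pos hs0 N).le
      calc Real.negMulLog ((μ (P 0)).toReal) ≤ 1 - (μ (P 0)).toReal := h1
      _ ≤ (μ (cosetCyl hdec 1 N)).toReal := by linarith
      _ ≤ s ^ N := h4.trans h5
      _ ≤ 3 * s ^ (N + 0) := by rw [Nat.add_zero]; linarith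
    | succ k =>
      have hP1 : μ (P (k + 1)) ≤ ((2 : ℝ≥0∞) ^ (N + k))⁻¹ := by
        refine (measure_mono ?_).trans (mu_cosetCyl_le hdec hfi hidx μ hμ 1 (N + k))
        rw [hPk]
        exact Set.diff_subset
      have h0 := ENNReal.toReal_nonneg (a := μ (P (k + 1)))
      have h1 := negMulLog_le_two_sqrt h0
      have h2 : Real.sqrt ((μ (P (k + 1))).toReal) ≤ Real.sqrt ((1 / 2 : ℝ) ^ (N + k)) :=
        Real.sqrt_le_sqrt (htr _ _ hP1)
      have h3 : Real.sqrt ((1 / 2 : ℝ) ^ (N + k)) = s ^ (N + k) :=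
        sqrt_pow_aux (1 / 2 : ℝ) (by norm_num) (N + k)
      have h6 : 0 ≤ s ^ (N + k) := (pow_pos hs0 (N + k)).le
      have h7 : s ^ (N + (k + 1)) = s ^ (N + k) * s := pow_succ s (N + k)
      calc Real.negMulLog ((μ (P (k + 1))).toReal)
          ≤ 2 * Real.sqrt ((μ (P (k + 1))).toReal) := h1
      _ ≤ 2 * s ^ (N + k) := by rw [← h3]; linarith
      _ ≤ 3 * s ^ (N + (k + 1)) := by rw [h7]; nlinarith
  have hsummf : Summable (fun i : ℕ => 3 * s ^ (N + i)) := by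
    have hg := (summable_geometric_of_lt_one hs0.le hs1).mul_left (3 * s ^ N)
    refine hg.congr fun i => ?_
    rw [pow_add]; ring
  have hnn : ∀ i, 0 ≤ Real.negMulLog ((μ (P i)).toReal) := fun i =>
    Real.negMulLog_nonneg ENNReal.toReal_nonneg (hprob _)
  have hsumm : Summable (fun i => Real.negMulLog ((μ (P i)).toReal)) :=
    Summable.of_nonneg_of_le hnn hbound hsummf
  have hgeo : ∑' i : ℕ, 3 * s ^ (N + i) = 3 * s ^ N * (1 - s)⁻¹ := by
    calc ∑' i : ℕ, 3 * s ^ (N + i) = ∑' i : ℕ, (3 * s ^ N) * s ^ i := by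
          refine tsum_congr fun i => ?_
          rw [pow_add]; ring
    _ = (3 * s ^ N) * ∑' i : ℕ, s ^ i := tsum_mul_left
    _ = 3 * s ^ N * (1 - s)⁻¹ := by rw [tsum_geometric_of_lt_one hs0.le hs1]
  have htsum : ∑' i, Real.negMulLog ((μ (P i)).toReal) ≤ ε := by
    have h := Summable.tsum_le_tsum hbound hsumm hsummf
    rw [hgeo] at h
    linarith
  refine ⟨P, ?_, ?_, ?_, ?_, hsumm, htsum⟩
  · -- measurability
    intro i
    cases i with
    | zero =>
      rw [hP0]
      exact (measurable_cosetCyl hdec 1 N).compl.union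
        (MeasurableSet.iInter fun m => measurable_cosetCyl hdec 1 m)
    | succ k =>
      rw [hPk]
      exact (measurable_cosetCyl hdec 1 (N + k)).diff (measurable_cosetCyl hdec 1 (N + k + 1))
  · -- pairwise disjoint
    have key : ∀ k l, k < l → Disjoint (P k) (P l) := by
      intro k l hkl
      rw [Set.disjoint_left]
      intro x hxk hxl
      obtain ⟨l', rfl⟩ : ∃ l', l = l' + 1 := ⟨l - 1, by omega⟩
      rw [hPk] at hxl
      match k, hkl with
      | 0, _ =>
        rw [hP0] at hxk
        rcases hxk with h | h
        · exact h (cosetCyl_anti hdec 1 (Nat.le_add_right N l') hxl.1)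
        · exact hxl.2 (Set.mem_iInter.1 h _)
      | (k' + 1), hkl =>
        rw [hPk] at hxk
        exact hxk.2 (cosetCyl_anti hdec 1 (by omega) hxl.1)
    intro i j hij
    rcases lt_or_gt_of_ne hij with h | h
    · exact key i j h
    · exact (key j i h).symm
  · -- covers
    ext x
    simp only [Set.mem_univ, iff_true]
    by_cases h1 : x ∈ cosetCyl hdec 1 N
    · by_cases h2 : x ∈ ⋂ m, cosetCyl hdec 1 m
      · exact Set.mem_iUnion.2 ⟨0, hP0 ▸ Set.mem_union_right _ h2⟩
      · obtain ⟨m0, hm0⟩ : ∃ m, x ∉ cosetCyl hdec 1 m := by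
          by_contra hc
          push_neg at hc
          exact h2 (Set.mem_iInter.2 hc)
        have hex : ∃ k, x ∉ cosetCyl hdec 1 (N + k + 1) :=
          ⟨m0, fun h => hm0 (cosetCyl_anti hdec 1 (by omega) h)⟩
        have hspec := Nat.find_spec hex
        have hmem : x ∈ cosetCyl hdec 1 (N + Nat.find hex) := by
          rcases Nat.eq_zero_or_pos (Nat.find hex) with h0 | h0
          · rw [h0]
            simpa using h1
          · have h3 := not_not.1 (Nat.find_min hex (m := Nat.find hex - 1) (by omega))
            have he : N + (Nat.find hex - 1) + 1 = N + Nat.find hex := by omega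
            rwa [he] at h3
        exact Set.mem_iUnion.2 ⟨Nat.find hex + 1, (hPk _) ▸ ⟨hmem, hspec⟩⟩
    · exact Set.mem_iUnion.2 ⟨0, hP0 ▸ Set.mem_union_left _ h1⟩
  · -- generating
    set F := MeasurableSpace.generateFrom
      {S : Set (profSpace H hdec) | ∃ (g : G) (i : ℕ), S = profAct H hdec g '' P i} with hF
    have hAg : ∀ (g : G) (j : ℕ),
        ∃ B, MeasurableSet[F] B ∧ μ (cosetCyl hdec g (N + j) ∆ B) = 0 := by
      intro g j
      refine ⟨⋃ k, profAct H hdec g '' P (j + k + 1),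
        MeasurableSet.iUnion fun k =>
          MeasurableSpace.measurableSet_generateFrom ⟨g, j + k + 1, rfl⟩, ?_⟩
      have himg2 : ∀ k : ℕ, profAct H hdec g '' P (j + k + 1)
          = cosetCyl hdec g (N + (j + k)) \ cosetCyl hdec g (N + (j + k) + 1) := by
        intro k
        rw [hPk (j + k), profAct_image_diff]
      refine measure_mono_null ?_ (mu_iInter_cosetCyl hdec hfi hidx μ hμ g)
      intro x hx
      rcases Set.mem_symmDiff.1 hx with ⟨hx1, hx2⟩ | ⟨hx1, hx2⟩
      · refine Set.mem_iInter.2 fun m => ?_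
        by_contra hm
        have hex : ∃ k, x ∉ cosetCyl hdec g (N + (j + k) + 1) :=
          ⟨m, fun h => hm (profSpace_compat hdec x g (by omega) h)⟩
        have hspec := Nat.find_spec hex
        have hmem : x ∈ cosetCyl hdec g (N + (j + Nat.find hex)) := by
          rcases Nat.eq_zero_or_pos (Nat.find hex) with h0 | h0
          · rw [h0]
            simpa using hx1
          · have h3 := not_not.1 (Nat.find_min hex (m := Nat.find hex - 1) (by omega))
            have he : N + (j + (Nat.find hex - 1)) + 1 = N + (j + Nat.find hex) := by omega
            rwa [he] at h3
        apply hx2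
        refine Set.mem_iUnion.2 ⟨Nat.find hex, ?_⟩
        rw [himg2]
        exact ⟨hmem, hspec⟩
      · obtain ⟨k, hk⟩ := Set.mem_iUnion.1 hx1
        rw [himg2 k] at hk
        exact absurd (profSpace_compat hdec x g (by omega) hk.1) hx2
    have hSet : ∀ (n : ℕ) (S : Set (G ⧸ H n)),
        ∃ B, MeasurableSet[F] B ∧
          μ (((fun x : profSpace H hdec => x.1 n) ⁻¹' S) ∆ B) = 0 := by
      intro n S
      have heq : (fun x : profSpace H hdec => x.1 n) ⁻¹' S
          = ⋃ g : {g : G // (g : G ⧸ H n) ∈ S}, cosetCyl hdec (g : G) (N + n) := by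
        ext x
        simp only [Set.mem_preimage, Set.mem_iUnion]
        constructor
        · intro hx
          obtain ⟨g, hg⟩ := QuotientGroup.mk_surjective (x.1 (N + n))
          have hgn : x.1 n = (g : G ⧸ H n) :=
            profSpace_compat hdec x g (by omega) hg.symm
          exact ⟨⟨g, hgn ▸ hx⟩, hg.symm⟩
        · rintro ⟨⟨g, hg⟩, hx⟩
          have hgn : x.1 n = (g : G ⧸ H n) :=
            profSpace_compat hdec x g (by omega) hx
          rwa [hgn]
      choose Bg hBg hBg0 using fun g : {g : G // (g : G ⧸ H n) ∈ S} => hAg g.1 n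
      refine ⟨⋃ g, Bg g, (approx_iUnion μ hBg hBg0).1, ?_⟩
      rw [heq]
      exact (approx_iUnion μ hBg hBg0).2
    intro A hA
    have hle : (profSpaceMeasurableSpace H hdec) ≤
        ({ MeasurableSet' := fun A => ∃ B, MeasurableSet[F] B ∧ μ (A ∆ B) = 0,
           measurableSet_empty := ⟨∅, MeasurableSet.empty, by simp⟩,
           measurableSet_compl := fun A h => by
             obtain ⟨B, hB, h0⟩ := h
             exact ⟨Bᶜ, hB.compl, by rwa [compl_symmDiff_compl]⟩,
           measurableSet_iUnion := fun f hf => by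
             choose B hB h0 using hf
             exact ⟨_, (approx_iUnion μ hB h0).1, (approx_iUnion μ hB h0).2⟩ } :
          MeasurableSpace (profSpace H hdec)) := by
      have hpi : (profSpaceMeasurableSpace H hdec)
          = MeasurableSpace.comap (Subtype.val)
            (⨆ n, MeasurableSpace.comap (fun b : ∀ n, G ⧸ H n => b n)
              (quotientCosetMeasurableSpace (H n))) := rfl
      refine le_trans (le_of_eq hpi) ?_
      rw [MeasurableSpace.comap_iSup]
      refine iSup_le fun n => ?_
      rw [MeasurableSpace.comap_comp]
      intro t ht
      obtain ⟨S, -, rfl⟩ := ht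
      exact hSet n S
    exact (MeasurableSpace.le_def.1 hle) A hA
end
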